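/- arXiv:1406.2597 — 4 statements merged into one kernel-verified Lean document; each statement's English description precedes it below -/
import Mathlib

section
/- For every x ∈ ℓ∞ one has t(x) = f_C(x), i.e., lim_{θ→1⁻} limsup_{n→∞} Θ_{θ,n}(x) equals the supremum of f(x) over all positive continuous linear functionals f on ℓ∞ extending the Cesàro mean. -/
open Filter Topology

noncomputable section

/-- The space `ℓ∞` of bounded real sequences. -/
abbrev EllInfty : Type := lp (fun _ : ℕ => ℝ) ⊤

/-- The characteristic sequence of a set `A ⊆ ℕ` (as a plain function). -/
def chiFun (A : Set ℕ) : ℕ → ℝ := A.indicator 1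

lemma chiFun_memℓp (A : Set ℕ) : Memℓp (chiFun A) ⊤ := by
  apply memℓp_infty
  refine ⟨1, ?_⟩
  rintro r ⟨n, rfl⟩
  by_cases h : n ∈ A <;> simp [chiFun, Set.indicator, h]

/-- The characteristic sequence of a set `A ⊆ ℕ` as an element of `ℓ∞`. -/
def chi (A : Set ℕ) : EllInfty := ⟨chiFun A, chiFun_memℓp A⟩

/-- `A(n) = |A ∩ {1,…,n}|` (as a real number). -/
def count (A : Set ℕ) (n : ℕ) : ℝ := ∑ k ∈ Finset.Icc 1 n, chiFun A k

/-- `A` has asymptotic density `d`, i.e. `A(n)/n → d`. -/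
def HasDensity (A : Set ℕ) (d : ℝ) : Prop :=
  Tendsto (fun n => count A n / n) atTop (𝓝 d)

/-- A density measure: a finitely additive measure `μ : 𝒫(ℕ) → [0,1]` with `μ(ℕ) = 1`
which extends the asymptotic density. -/
def IsDensityMeasure (μ : Set ℕ → ℝ) : Prop :=
  (∀ A B : Set ℕ, Disjoint A B → μ (A ∪ B) = μ A + μ B) ∧
  (∀ A : Set ℕ, μ A ∈ Set.Icc (0 : ℝ) 1) ∧
  μ Set.univ = 1 ∧
  (∀ A d, HasDensity A d → μ A = d)

/-- The sequence of Cesàro averages `(x₁ + … + xₙ)/n`. -/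
def cesaroAvg (x : ℕ → ℝ) (n : ℕ) : ℝ := (∑ i ∈ Finset.Icc 1 n, x i) / n

/-- `x` has Cesàro mean `c`. -/
def HasCesaro (x : ℕ → ℝ) (c : ℝ) : Prop := Tendsto (cesaroAvg x) atTop (𝓝 c)

/-- A functional on `ℓ∞` is positive if it is nonnegative on nonnegative sequences. -/
def IsPositiveFunctional (f : EllInfty → ℝ) : Prop :=
  ∀ x : EllInfty, (∀ n, 0 ≤ x n) → 0 ≤ f x

/-- A functional on `ℓ∞` extends the Cesàro mean. -/
def ExtendsCesaro (f : EllInfty → ℝ) : Prop :=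
  ∀ (x : EllInfty) (c : ℝ), HasCesaro (⇑x) c → f x = c

/-- The set of positive continuous linear functionals on `ℓ∞` extending the Cesàro mean. -/
def Cesex : Set (EllInfty →L[ℝ] ℝ) :=
  {f | IsPositiveFunctional f ∧ ExtendsCesaro f}

/-- `f_C(x) = sup { f(x) : f ∈ Cesex }`. -/
def fC (x : EllInfty) : ℝ := sSup ((fun f : EllInfty →L[ℝ] ℝ => f x) '' Cesex)

/-- `Θ_{θ,n}(x) = (Σ_{θn < i ≤ n} x_i) / (n(1-θ))`. -/
def Theta (x : ℕ → ℝ) (θ : ℝ) (n : ℕ) : ℝ :=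
  (∑ i ∈ Finset.Icc 1 n, if θ * n < (i : ℝ) then x i else 0) / (n * (1 - θ))

/-- `Θ_θ(x) = limsup_{n → ∞} Θ_{θ,n}(x)`. -/
def ThetaSup (x : ℕ → ℝ) (θ : ℝ) : ℝ := limsup (Theta x θ) atTop

/-- `t(x) = lim_{θ → 1⁻} Θ_θ(x)`. -/
def tFun (x : ℕ → ℝ) : ℝ := limUnder (𝓝[<] (1 : ℝ)) (ThetaSup x)

/-- `A_α(n) = Σ_{k ∈ A, k ≤ n} k^α`. -/
def aSum (A : Set ℕ) (α : ℝ) (n : ℕ) : ℝ :=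
  ∑ k ∈ Finset.Icc 1 n, chiFun A k * (k : ℝ) ^ α

/-- The upper `α`-density `d̄_α(A) = limsup_{n→∞} A_α(n)/ℕ_α(n)`. -/
def upperADens (A : Set ℕ) (α : ℝ) : ℝ :=
  limsup (fun n => aSum A α n / aSum Set.univ α n) atTop

/-- The lower `α`-density `d̲_α(A) = liminf_{n→∞} A_α(n)/ℕ_α(n)`. -/
def lowerADens (A : Set ℕ) (α : ℝ) : ℝ :=
  liminf (fun n => aSum A α n / aSum Set.univ α n) atTop

/-- `d̄_∞(A) = lim_{α→∞} d̄_α(A)`. -/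
def dInftyUpper (A : Set ℕ) : ℝ := limUnder (atTop : Filter ℝ) (upperADens A)

/-- `d̲_∞(A) = lim_{α→∞} d̲_α(A)`. -/
def dInftyLower (A : Set ℕ) : ℝ := limUnder (atTop : Filter ℝ) (lowerADens A)

/-- The quotient `(A(n) - A(⌊θn⌋))/(n - θn)` appearing in the Pólya density. -/
def polyaQuot (A : Set ℕ) (θ : ℝ) (n : ℕ) : ℝ :=
  (count A n - count A ⌊θ * n⌋₊) / (n - θ * n)

/-- The upper Pólya density `p̄(A)`. -/
def pUpper (A : Set ℕ) : ℝ :=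
  limUnder (𝓝[<] (1 : ℝ)) (fun θ => limsup (polyaQuot A θ) atTop)

/-- The lower Pólya density `p̲(A)`. -/
def pLower (A : Set ℕ) : ℝ :=
  limUnder (𝓝[<] (1 : ℝ)) (fun θ => liminf (polyaQuot A θ) atTop)

/-- `λ̄(A) = sup { μ(A) : μ a density measure }`. -/
def lamUpper (A : Set ℕ) : ℝ := sSup {r | ∃ μ, IsDensityMeasure μ ∧ μ A = r}

/-- `λ̲(A) = inf { μ(A) : μ a density measure }`. -/
def lamLower (A : Set ℕ) : ℝ := sInf {r | ∃ μ, IsDensityMeasure μ ∧ μ A = r}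

/-- `d̄*(A) = inf { d(B) : B ⊇ A, B ∈ 𝒟 }`. -/
def dUpperStar (A : Set ℕ) : ℝ := sInf {r | ∃ B, A ⊆ B ∧ HasDensity B r}

/-- `d̲*(A) = sup { d(B) : B ⊆ A, B ∈ 𝒟 }`. -/
def dLowerStar (A : Set ℕ) : ℝ := sSup {r | ∃ B, B ⊆ A ∧ HasDensity B r}

/-- The `ℱ`-limit of a (bounded) real sequence along an ultrafilter `ℱ`:
the unique `L` with `Tendsto x ℱ (𝓝 L)` (when it exists). -/
def ulim (F : Ultrafilter ℕ) (x : ℕ → ℝ) : ℝ := limUnder (F : Filter ℕ) x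

/-- An ultrafilter is free (non-principal) iff it contains all cofinite sets. -/
def IsFreeUltrafilter (F : Ultrafilter ℕ) : Prop := (F : Filter ℕ) ≤ Filter.cofinite

/-- The set of positive functionals extending Cesàro mean, inside the weak-* dual of `ℓ∞`. -/
def CesexW : Set (WeakDual ℝ EllInfty) :=
  {f | (∀ x : EllInfty, (∀ n, 0 ≤ x n) → 0 ≤ f x) ∧
    ∀ (x : EllInfty) (c : ℝ), HasCesaro (⇑x) c → f x = c}

/-! ### Auxiliary development for `stmt13` -/

namespace Stmt13Aux

/-- Window sum `∑_{m < i ≤ n} x i`. -/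
def WSum (x : ℕ → ℝ) (m n : ℕ) : ℝ := ∑ i ∈ Finset.Ioc m n, x i

lemma Icc_one_eq_Ioc (n : ℕ) : Finset.Icc 1 n = Finset.Ioc 0 n := rfl

lemma cesaroAvg_eq (x : ℕ → ℝ) (n : ℕ) : cesaroAvg x n = WSum x 0 n / n := rfl

lemma wsum_add (x : ℕ → ℝ) {m n k : ℕ} (h1 : m ≤ n) (h2 : n ≤ k) :
    WSum x m n + WSum x n k = WSum x m k :=
  Finset.sum_Ioc_consecutive _ h1 h2

lemma abs_wsum_le {x : ℕ → ℝ} {M : ℝ} (hM : ∀ i, |x i| ≤ M) {m n : ℕ} (h : m ≤ n) :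
    |WSum x m n| ≤ M * ((n : ℝ) - m) := by
  calc |WSum x m n| ≤ ∑ i ∈ Finset.Ioc m n, |x i| := Finset.abs_sum_le_sum_abs _ _
    _ ≤ ∑ _i ∈ Finset.Ioc m n, M := Finset.sum_le_sum fun i _ => hM i
    _ = M * ((n : ℝ) - m) := by
        rw [Finset.sum_const, Nat.card_Ioc, nsmul_eq_mul, mul_comm, Nat.cast_sub h]

lemma floor_theta_le {θ : ℝ} (hθ : θ ∈ Set.Ioo 0 1) (n : ℕ) : ⌊θ * n⌋₊ ≤ n := by
  calc ⌊θ * n⌋₊ ≤ ⌊(n : ℝ)⌋₊ := by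
        apply Nat.floor_le_floor
        nlinarith [hθ.2, hθ.1, Nat.cast_nonneg (α := ℝ) n]
    _ = n := Nat.floor_natCast n

lemma theta_eq {θ : ℝ} (hθ : θ ∈ Set.Ioo 0 1) (x : ℕ → ℝ) (n : ℕ) :
    Theta x θ n = WSum x ⌊θ * n⌋₊ n / (n * (1 - θ)) := by
  have h0 : (0 : ℝ) ≤ θ * n := mul_nonneg hθ.1.le (Nat.cast_nonneg n)
  unfold Theta WSum
  congr 1
  rw [← Finset.sum_filter]
  apply Finset.sum_congr _ (fun _ _ => rfl)
  ext i
  simp only [Finset.mem_filter, Finset.mem_Icc, Finset.mem_Ioc]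
  constructor
  · rintro ⟨⟨h1, h2⟩, h3⟩
    exact ⟨(Nat.floor_lt h0).2 h3, h2⟩
  · rintro ⟨h1, h2⟩
    have := (Nat.floor_lt h0).1 h1
    refine ⟨⟨?_, h2⟩, this⟩
    omega

lemma theta_zero_of_nzero (x : ℕ → ℝ) (θ : ℝ) : Theta x θ 0 = 0 := by
  simp [Theta]

/-- Pointwise bound for `Theta`, positive `n` version. -/
lemma theta_abs_le' {θ : ℝ} (hθ : θ ∈ Set.Ioo 0 1) {x : ℕ → ℝ} {M : ℝ}
    (hM : ∀ i, |x i| ≤ M) {n : ℕ} (hn : 1 ≤ n) :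
    |Theta x θ n| ≤ M + M / (n * (1 - θ)) := by
  have hM0 : 0 ≤ M := (abs_nonneg _).trans (hM 0)
  have h1θ : (0 : ℝ) < 1 - θ := by linarith [hθ.2]
  have hnpos : (0 : ℝ) < n := by exact_mod_cast hn
  have hden : (0 : ℝ) < n * (1 - θ) := by positivity
  rw [theta_eq hθ, abs_div, abs_of_pos hden, div_le_iff₀ hden]
  have hfl : ⌊θ * n⌋₊ ≤ n := floor_theta_le hθ n
  have hw : |WSum x ⌊θ * n⌋₊ n| ≤ M * ((n : ℝ) - ⌊θ * n⌋₊) := abs_wsum_le hM hfl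
  have hfl2 : θ * n - 1 < (⌊θ * n⌋₊ : ℝ) := by
    have := Nat.lt_floor_add_one (θ * n)
    linarith
  calc |WSum x ⌊θ * n⌋₊ n| ≤ M * ((n : ℝ) - ⌊θ * n⌋₊) := hw
    _ ≤ M * (n * (1 - θ) + 1) := by nlinarith
    _ = (M + M / (n * (1 - θ))) * (n * (1 - θ)) := by field_simp

lemma theta_abs_le {θ : ℝ} (hθ : θ ∈ Set.Ioo 0 1) {x : ℕ → ℝ} {M : ℝ}
    (hM : ∀ i, |x i| ≤ M) (n : ℕ) :
    |Theta x θ n| ≤ M + M / (1 - θ) := by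
  have hM0 : 0 ≤ M := (abs_nonneg _).trans (hM 0)
  have h1θ : (0 : ℝ) < 1 - θ := by linarith [hθ.2]
  rcases Nat.eq_zero_or_pos n with h | h
  · subst h; rw [theta_zero_of_nzero, abs_zero]; positivity
  · refine (theta_abs_le' hθ hM h).trans ?_
    have hn1 : (1 : ℝ) ≤ n := by exact_mod_cast h
    have hden : (0 : ℝ) < (n : ℝ) * (1 - θ) := by positivity
    have : M / (n * (1 - θ)) ≤ M / (1 - θ) := by
      rw [div_le_div_iff₀ hden h1θ]
      nlinarith [mul_nonneg (mul_nonneg hM0 h1θ.le) (by linarith : (0:ℝ) ≤ (n : ℝ) - 1)]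
    linarith

lemma theta_boundedUnder_le {θ : ℝ} (hθ : θ ∈ Set.Ioo 0 1) {x : ℕ → ℝ} {M : ℝ}
    (hM : ∀ i, |x i| ≤ M) :
    IsBoundedUnder (· ≤ ·) atTop (Theta x θ) :=
  isBoundedUnder_of_eventually_le
    (Eventually.of_forall fun n => (abs_le.1 (theta_abs_le hθ hM n)).2)

lemma theta_boundedUnder_ge {θ : ℝ} (hθ : θ ∈ Set.Ioo 0 1) {x : ℕ → ℝ} {M : ℝ}
    (hM : ∀ i, |x i| ≤ M) :
    IsBoundedUnder (· ≥ ·) atTop (Theta x θ) :=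
  isBoundedUnder_of_eventually_ge
    (Eventually.of_forall fun n => (abs_le.1 (theta_abs_le hθ hM n)).1)

/-- eventual bound: `|Theta x θ n| ≤ M + ε` for large `n`. -/
lemma theta_eventually_abs_le {θ : ℝ} (hθ : θ ∈ Set.Ioo 0 1) {x : ℕ → ℝ} {M : ℝ}
    (hM : ∀ i, |x i| ≤ M) {ε : ℝ} (hε : 0 < ε) :
    ∀ᶠ n in atTop, |Theta x θ n| ≤ M + ε := by
  have hM0 : 0 ≤ M := (abs_nonneg _).trans (hM 0)
  have h1θ : (0 : ℝ) < 1 - θ := by linarith [hθ.2]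
  filter_upwards [eventually_ge_atTop (⌈M / (ε * (1 - θ))⌉₊ + 1)] with n hn
  have hn1 : 1 ≤ n := le_trans (Nat.le_add_left 1 _) hn
  refine (theta_abs_le' hθ hM hn1).trans ?_
  have h2 : (⌈M / (ε * (1 - θ))⌉₊ : ℝ) ≤ n - 1 := by
    have : (⌈M / (ε * (1 - θ))⌉₊ + 1 : ℝ) ≤ n := by exact_mod_cast Nat.cast_le.2 hn
    linarith
  have h3 : M / (ε * (1 - θ)) ≤ (n : ℝ) - 1 := (Nat.le_ceil _).trans h2
  have hnpos : (0 : ℝ) < n := by positivity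
  have : M / (n * (1 - θ)) ≤ ε := by
    rw [div_le_iff₀ (by positivity)]
    have hεθ : 0 < ε * (1 - θ) := by positivity
    rw [div_le_iff₀ hεθ] at h3
    nlinarith
  linarith

lemma thetaSup_le_of_bound {θ : ℝ} (hθ : θ ∈ Set.Ioo 0 1) {x : ℕ → ℝ} {M : ℝ}
    (hM : ∀ i, |x i| ≤ M) : ThetaSup x θ ≤ M := by
  refine le_of_forall_pos_le_add fun ε hε => ?_
  refine limsup_le_of_le (theta_boundedUnder_ge hθ hM).isCoboundedUnder_le ?_
  filter_upwards [theta_eventually_abs_le hθ hM hε] with n hn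
  exact (abs_le.1 hn).2

lemma thetaSup_ge_of_bound {θ : ℝ} (hθ : θ ∈ Set.Ioo 0 1) {x : ℕ → ℝ} {M : ℝ}
    (hM : ∀ i, |x i| ≤ M) : -M ≤ ThetaSup x θ := by
  have h : ∀ ε, 0 < ε → -M - ε ≤ ThetaSup x θ := by
    intro ε hε
    refine le_limsup_of_le (theta_boundedUnder_le hθ hM) fun b hb => ?_
    obtain ⟨n, hn1, hn2⟩ :=
      ((theta_eventually_abs_le hθ hM hε).and hb).exists
    linarith [(abs_le.1 hn1).1]
  by_contra hcon
  push_neg at hcon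
  have := h ((-M - ThetaSup x θ) / 2) (by linarith)
  linarith

lemma thetaSup_abs_le {θ : ℝ} (hθ : θ ∈ Set.Ioo 0 1) {x : ℕ → ℝ} {M : ℝ}
    (hM : ∀ i, |x i| ≤ M) : |ThetaSup x θ| ≤ M :=
  abs_le.2 ⟨thetaSup_ge_of_bound hθ hM, thetaSup_le_of_bound hθ hM⟩

lemma theta_add (x y : ℕ → ℝ) (θ : ℝ) (n : ℕ) :
    Theta (fun i => x i + y i) θ n = Theta x θ n + Theta y θ n := by
  unfold Theta
  rw [← add_div, ← Finset.sum_add_distrib]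
  congr 1
  apply Finset.sum_congr rfl
  intro i _
  split_ifs <;> simp

lemma theta_mul (x : ℕ → ℝ) (c θ : ℝ) (n : ℕ) :
    Theta (fun i => c * x i) θ n = c * Theta x θ n := by
  simp only [Theta]
  rw [← mul_div_assoc, Finset.mul_sum]
  congr 1
  apply Finset.sum_congr rfl
  intro i _
  split_ifs <;> simp

lemma theta_nonpos {θ : ℝ} (hθ : θ ∈ Set.Ioo 0 1) {x : ℕ → ℝ}
    (hx : ∀ i, x i ≤ 0) (n : ℕ) : Theta x θ n ≤ 0 := by
  unfold Theta
  apply div_nonpos_of_nonpos_of_nonneg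
  · apply Finset.sum_nonpos
    intro i _
    split_ifs
    · exact hx i
    · exact le_rfl
  · have h1 : (0:ℝ) ≤ (n:ℝ) := Nat.cast_nonneg n
    nlinarith [hθ.2]

lemma thetaSup_nonpos {θ : ℝ} (hθ : θ ∈ Set.Ioo 0 1) {x : ℕ → ℝ} {M : ℝ}
    (hM : ∀ i, |x i| ≤ M) (hx : ∀ i, x i ≤ 0) : ThetaSup x θ ≤ 0 :=
  limsup_le_of_le ((theta_boundedUnder_ge hθ hM).isCoboundedUnder_le)
    (Eventually.of_forall (theta_nonpos hθ hx))

lemma thetaSup_add_le {θ : ℝ} (hθ : θ ∈ Set.Ioo 0 1) {x y : ℕ → ℝ} {Mx My : ℝ}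
    (hMx : ∀ i, |x i| ≤ Mx) (hMy : ∀ i, |y i| ≤ My) :
    ThetaSup (fun i => x i + y i) θ ≤ ThetaSup x θ + ThetaSup y θ := by
  refine le_of_forall_pos_le_add fun ε hε => ?_
  have hx : ∀ᶠ n in atTop, Theta x θ n < ThetaSup x θ + ε / 2 :=
    eventually_lt_of_limsup_lt (by simp only [ThetaSup] at *; linarith)
      (theta_boundedUnder_le hθ hMx)
  have hy : ∀ᶠ n in atTop, Theta y θ n < ThetaSup y θ + ε / 2 :=
    eventually_lt_of_limsup_lt (by simp only [ThetaSup] at *; linarith)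
      (theta_boundedUnder_le hθ hMy)
  have hxy : ∀ i, |x i + y i| ≤ Mx + My := fun i =>
    (abs_add_le _ _).trans (add_le_add (hMx i) (hMy i))
  simp only [ThetaSup]
  refine limsup_le_of_le (theta_boundedUnder_ge hθ hxy).isCoboundedUnder_le ?_
  filter_upwards [hx, hy] with n h1 h2
  rw [theta_add]
  simp only [ThetaSup] at *
  linarith

lemma thetaSup_mul {θ : ℝ} (hθ : θ ∈ Set.Ioo 0 1) {x : ℕ → ℝ} {M c : ℝ}
    (hM : ∀ i, |x i| ≤ M) (hc : 0 ≤ c) :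
    ThetaSup (fun i => c * x i) θ = c * ThetaSup x θ := by
  have key := Monotone.map_limsup_of_continuousAt (F := atTop) (f := fun r : ℝ => c * r)
    (fun a b hab => mul_le_mul_of_nonneg_left hab hc) (Theta x θ)
    (continuous_mul_left c).continuousAt
    (theta_boundedUnder_le hθ hM)
    (theta_boundedUnder_ge hθ hM).isCoboundedUnder_le
  have heq : Theta (fun i => c * x i) θ = fun n => c * Theta x θ n := funext (theta_mul x c θ)
  unfold ThetaSup
  rw [heq]
  exact key.symm


/-! ### Cesàro facts -/

lemma hasCesaro_neg {x : ℕ → ℝ} {c : ℝ} (h : HasCesaro x c) :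
    HasCesaro (fun i => -x i) (-c) := by
  have heq : cesaroAvg (fun i => -x i) = fun n => -cesaroAvg x n := by
    funext n
    simp [cesaroAvg, neg_div]
  unfold HasCesaro
  rw [heq]
  exact h.neg

lemma cesaroAvg_const (c : ℝ) {n : ℕ} (hn : 1 ≤ n) : cesaroAvg (fun _ => c) n = c := by
  have hn0 : (n : ℝ) ≠ 0 := by
    have : (0:ℝ) < n := by exact_mod_cast hn
    exact this.ne'
  have hcard : (Finset.Icc 1 n).card = n := by
    rw [Nat.card_Icc]; omega
  rw [cesaroAvg, Finset.sum_const, hcard, nsmul_eq_mul]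
  field_simp

lemma hasCesaro_const (c : ℝ) : HasCesaro (fun _ => c) c := by
  apply Tendsto.congr' (f₁ := fun _ => c) _ tendsto_const_nhds
  filter_upwards [eventually_ge_atTop 1] with n hn
  exact (cesaroAvg_const c hn).symm

/-- If `x` has Cesàro mean `c`, then `Theta x θ n → c` for each fixed `θ ∈ (0,1)`. -/
lemma tendsto_theta_of_hasCesaro {θ : ℝ} (hθ : θ ∈ Set.Ioo 0 1) {x : ℕ → ℝ} {c : ℝ}
    (hc : HasCesaro x c) :
    Tendsto (Theta x θ) atTop (𝓝 c) := by
  have h1θ : (0:ℝ) < 1 - θ := by linarith [hθ.2]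
  have hθ0 : (0:ℝ) < θ := hθ.1
  rw [Metric.tendsto_atTop]
  intro ε hε
  set δ := ε * (1 - θ) / 8 with hδdef
  have hδ0 : 0 < δ := by positivity
  obtain ⟨N₁, hN₁⟩ := Metric.tendsto_atTop.1 hc δ hδ0
  -- partial-sum bound
  have hS : ∀ n : ℕ, N₁ ≤ n → 1 ≤ n → |WSum x 0 n - c * n| ≤ δ * n := by
    intro n hn hn1
    have h2 := hN₁ n hn
    rw [Real.dist_eq, cesaroAvg_eq] at h2
    have hnpos : (0:ℝ) < n := by exact_mod_cast hn1
    have h3 : |WSum x 0 n - c * n| = |WSum x 0 n / n - c| * n := by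
      have e : (WSum x 0 n / n - c) * n = WSum x 0 n - c * n := by
        field_simp
      rw [← e, abs_mul, abs_of_pos hnpos]
    rw [h3]
    have := le_of_lt h2
    nlinarith
  set K₂ := ⌈((N₁ : ℝ) + 1) / θ⌉₊ with hK₂
  set K₃ := ⌈2 * (|c| + 1) / (ε * (1 - θ))⌉₊ with hK₃
  refine ⟨max (max N₁ 1) (max K₂ K₃), fun n hn => ?_⟩
  have hnN₁ : N₁ ≤ n := le_trans (le_trans (le_max_left _ _) (le_max_left _ _)) hn
  have hn1 : 1 ≤ n := le_trans (le_trans (le_max_right _ _) (le_max_left _ _)) hn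
  have hnK₂ : K₂ ≤ n := le_trans (le_trans (le_max_left _ _) (le_max_right _ _)) hn
  have hnK₃ : K₃ ≤ n := le_trans (le_trans (le_max_right _ _) (le_max_right _ _)) hn
  have hnpos : (0:ℝ) < n := by exact_mod_cast hn1
  set m := ⌊θ * n⌋₊ with hm
  have hmn : m ≤ n := floor_theta_le hθ n
  have hmθ : (m : ℝ) ≤ θ * n := Nat.floor_le (by positivity)
  have hmθ' : θ * n - 1 < (m : ℝ) := by
    have := Nat.lt_floor_add_one (θ * n)
    linarith
  -- m is large
  have hmN₁ : N₁ ≤ m ∧ 1 ≤ m := by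
    have h4 : ((N₁ : ℝ) + 1) / θ ≤ n := le_trans (Nat.le_ceil _) (Nat.cast_le.2 hnK₂)
    have h5 : (N₁ : ℝ) + 1 ≤ θ * n := by
      rw [div_le_iff₀ hθ0] at h4
      linarith [h4]
    have h6 : (N₁ : ℝ) ≤ m := by linarith
    have hm0 : 0 < m := by
      have hN0 : (0:ℝ) ≤ N₁ := Nat.cast_nonneg _
      have : (0:ℝ) < m := by linarith
      exact_mod_cast this
    exact ⟨by exact_mod_cast h6, hm0⟩
  have hSn := hS n hnN₁ hn1
  have hSm := hS m hmN₁.1 hmN₁.2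
  have hsplit : WSum x m n = WSum x 0 n - WSum x 0 m := by
    rw [← wsum_add x (Nat.zero_le m) hmn]
    ring
  have hden : (0:ℝ) < (n : ℝ) * (1 - θ) := by positivity
  rw [Real.dist_eq, theta_eq hθ, ← hm]
  have hkey : |WSum x m n - c * ((n:ℝ) * (1 - θ))| ≤ 2 * δ * n + |c| := by
    have t0 : ∀ p q : ℝ, |p - q| ≤ |p| + |q| := fun p q => by
      rw [sub_eq_add_neg]
      exact (abs_add_le _ _).trans (le_of_eq (by rw [abs_neg]))
    have e1 : WSum x m n - c * ((n:ℝ) * (1 - θ))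
        = ((WSum x 0 n - c * n) - (WSum x 0 m - c * m)) - c * ((m:ℝ) - θ * n) := by
      rw [hsplit]; ring
    rw [e1]
    have e2 : |c * ((m:ℝ) - θ * n)| ≤ |c| := by
      rw [abs_mul]
      have habs : |(m:ℝ) - θ * n| ≤ 1 := by
        rw [abs_le]; constructor <;> linarith
      nlinarith [abs_nonneg c]
    have e3 : (m : ℝ) ≤ n := by exact_mod_cast hmn
    have h5 := (t0 ((WSum x 0 n - c * n) - (WSum x 0 m - c * m)) (c * ((m:ℝ) - θ * n))).trans
      (add_le_add_left (t0 (WSum x 0 n - c * n) (WSum x 0 m - c * m)) _)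
    have h6 : δ * (m:ℝ) ≤ δ * n := by nlinarith
    linarith [hSn, hSm, e2, h5]
  -- conclude
  have hne : ((n:ℝ) * (1 - θ)) ≠ 0 := hden.ne'
  have hh : WSum x m n / ((n:ℝ) * (1 - θ)) - c
      = (WSum x m n - c * ((n:ℝ) * (1 - θ))) / ((n:ℝ) * (1 - θ)) := by
    rw [sub_div, mul_div_assoc, div_self hne, mul_one]
  rw [hh, abs_div, abs_of_pos hden, div_lt_iff₀ hden]
  -- |c| is small compared to ε * n * (1-θ)
  have hK₃' : 2 * (|c| + 1) / (ε * (1 - θ)) ≤ (n:ℝ) :=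
    le_trans (Nat.le_ceil _) (Nat.cast_le.2 hnK₃)
  have hc2 : 2 * (|c| + 1) ≤ ε * (1 - θ) * n := by
    rw [div_le_iff₀ (by positivity)] at hK₃'
    linarith
  have hδn : 2 * δ * n = ε * ((n:ℝ) * (1 - θ)) / 4 := by
    rw [hδdef]; ring
  calc |WSum x m n - c * ((n:ℝ) * (1 - θ))| ≤ 2 * δ * n + |c| := hkey
    _ < ε * ((n:ℝ) * (1 - θ)) := by
        rw [hδn]
        nlinarith [abs_nonneg c]

/-- `ThetaSup` of a Cesàro-convergent sequence equals its mean. -/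
lemma thetaSup_of_hasCesaro {θ : ℝ} (hθ : θ ∈ Set.Ioo 0 1) {x : ℕ → ℝ} {c : ℝ}
    (hc : HasCesaro x c) : ThetaSup x θ = c :=
  (tendsto_theta_of_hasCesaro hθ hc).limsup_eq

/-! ### `ℓ∞` coordinates -/

lemma coord_abs_le (x : EllInfty) (i : ℕ) : |x i| ≤ ‖x‖ := by
  have h := lp.norm_apply_le_norm (E := fun _ : ℕ => ℝ) (p := ⊤) ENNReal.top_ne_zero x i
  have h2 : ‖x i‖ = |x i| := Real.norm_eq_abs _
  rw [← h2]
  exact h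

lemma const_memℓp (c : ℝ) : Memℓp (fun _ : ℕ => c) ⊤ := by
  apply memℓp_infty
  refine ⟨|c|, ?_⟩
  rintro r ⟨n, rfl⟩
  simp

def constSeq (c : ℝ) : EllInfty := ⟨fun _ => c, const_memℓp c⟩

lemma constSeq_coe (c : ℝ) : ⇑(constSeq c) = fun _ => c := rfl

/-! ### Consequences of membership in `Cesex` -/

lemma cesex_mono {f : EllInfty →L[ℝ] ℝ} (hf : f ∈ Cesex) {u v : EllInfty}
    (h : ∀ n, u n ≤ v n) : f u ≤ f v := by
  have h0 : ∀ n, 0 ≤ (v - u) n := by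
    intro n
    rw [lp.coeFn_sub, Pi.sub_apply]
    linarith [h n]
  have hpos := hf.1 (v - u) h0
  have hlin : f (v - u) = f v - f u := by rw [map_sub]
  linarith

lemma cesex_le_of_dominated {f : EllInfty →L[ℝ] ℝ} (hf : f ∈ Cesex) {u Y : EllInfty} {c : ℝ}
    (h : ∀ n, u n ≤ Y n) (hY : HasCesaro (⇑Y) c) : f u ≤ c := by
  have h2 := cesex_mono hf h
  rwa [hf.2 Y c hY] at h2

lemma cesex_le_norm {f : EllInfty →L[ℝ] ℝ} (hf : f ∈ Cesex) (u : EllInfty) : f u ≤ ‖u‖ := by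
  refine cesex_le_of_dominated hf (Y := constSeq ‖u‖) (fun n => ?_) ?_
  · exact le_trans (le_abs_self _) (coord_abs_le u n)
  · rw [constSeq_coe]
    exact hasCesaro_const _

/-! ### Hahn–Banach: functionals attaining `ThetaSup x θ` -/

lemma theta_coe_zero (θ : ℝ) (n : ℕ) : Theta (⇑(0 : EllInfty)) θ n = 0 := by
  have : ⇑(0 : EllInfty) = fun _ : ℕ => (0:ℝ) := by
    funext i
    simp [lp.coeFn_zero]
  rw [this]
  simp [Theta]

lemma thetaSup_coe_zero (θ : ℝ) : ThetaSup (⇑(0 : EllInfty)) θ = 0 := by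
  unfold ThetaSup
  have : Theta (⇑(0 : EllInfty)) θ = fun _ : ℕ => (0:ℝ) := funext (theta_coe_zero θ)
  rw [this, limsup_const]

lemma exists_cesex_eq_thetaSup (x : EllInfty) {θ : ℝ} (hθ : θ ∈ Set.Ioo 0 1) (hx0 : x ≠ 0) :
    ∃ f : EllInfty →L[ℝ] ℝ, f ∈ Cesex ∧ f x = ThetaSup (⇑x) θ := by
  classical
  set Nf : EllInfty → ℝ := fun y => ThetaSup (⇑y) θ with hNf
  have N_add : ∀ y z : EllInfty, Nf (y + z) ≤ Nf y + Nf z := by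
    intro y z
    have hcoe : ⇑(y + z) = fun i => y i + z i := by
      rw [lp.coeFn_add]; rfl
    simp only [hNf, hcoe]
    exact thetaSup_add_le hθ (coord_abs_le y) (coord_abs_le z)
  have N_hom : ∀ r : ℝ, 0 < r → ∀ y : EllInfty, Nf (r • y) = r * Nf y := by
    intro r hr y
    have hcoe : ⇑(r • y) = fun i => r * y i := by
      rw [lp.coeFn_smul]; rfl
    simp only [hNf, hcoe]
    exact thetaSup_mul hθ (coord_abs_le y) hr.le
  have N_le_norm : ∀ y : EllInfty, Nf y ≤ ‖y‖ := fun y =>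
    thetaSup_le_of_bound hθ (coord_abs_le y)
  have N_negneg : ∀ y : EllInfty, 0 ≤ Nf y + Nf (-y) := by
    intro y
    have h1 := N_add y (-y)
    rw [add_neg_cancel] at h1
    have h2 : Nf 0 = 0 := thetaSup_coe_zero θ
    linarith
  -- the span-singleton partial linear map
  set F₀ := LinearPMap.mkSpanSingleton' (σ := RingHom.id ℝ) x (Nf x)
    (fun c hc => by
      rcases smul_eq_zero.1 hc with h | h
      · simp [h]
      · exact absurd h hx0) with hF₀
  have hdom : ∀ z : F₀.domain, F₀ z ≤ Nf z := by
    rintro ⟨z, hz⟩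
    have hz' : z ∈ Submodule.span ℝ {x} := hz
    obtain ⟨r, hr⟩ := Submodule.mem_span_singleton.1 hz'
    have hz2 : (⟨z, hz⟩ : F₀.domain) = ⟨r • x, hr ▸ hz⟩ := Subtype.ext hr.symm
    rw [hz2]
    have happ : F₀ ⟨r • x, hr ▸ hz⟩ = r • Nf x := LinearPMap.mkSpanSingleton'_apply _ _ _ r _
    rw [happ, smul_eq_mul]
    have hcoe : ((⟨r • x, hr ▸ hz⟩ : F₀.domain) : EllInfty) = r • x := rfl
    rw [hcoe]
    rcases lt_trichotomy r 0 with hrc | hrc | hrc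
    · have h1 : Nf (r • x) = (-r) * Nf (-x) := by
        have : r • x = (-r) • (-x) := by simp
        rw [this, N_hom (-r) (by linarith) (-x)]
      rw [h1]
      have h2 := N_negneg x
      nlinarith
    · subst hrc
      rw [zero_smul, zero_mul]
      have h2 : Nf 0 = 0 := thetaSup_coe_zero θ
      rw [h2]
    · rw [N_hom r hrc x]
  obtain ⟨g, hg1, hg2⟩ := exists_extension_of_le_sublinear F₀ Nf N_hom N_add hdom
  have hgx : g x = Nf x := by
    have h1 := hg1 ⟨x, Submodule.mem_span_singleton_self x⟩
    have h2 : F₀ ⟨x, Submodule.mem_span_singleton_self x⟩ = Nf x :=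
      LinearPMap.mkSpanSingleton'_apply_self _ _ _ _
    rw [← h2, ← h1]
  have hbound : ∀ y : EllInfty, ‖g y‖ ≤ 1 * ‖y‖ := by
    intro y
    rw [Real.norm_eq_abs, one_mul, abs_le]
    constructor
    · have h1 : g (-y) ≤ Nf (-y) := hg2 (-y)
      have h2 : Nf (-y) ≤ ‖-y‖ := N_le_norm (-y)
      rw [map_neg, norm_neg] at *
      linarith [h1, h2]
    · exact (hg2 y).trans (N_le_norm y)
  set f := g.mkContinuous 1 hbound with hf
  have hfy : ∀ y : EllInfty, f y = g y := fun y => rfl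
  refine ⟨f, ⟨?_, ?_⟩, ?_⟩
  · -- positivity
    intro y hy
    have h1 : f (-y) ≤ Nf (-y) := by rw [hfy]; exact hg2 (-y)
    have h2 : Nf (-y) ≤ 0 := by
      apply thetaSup_nonpos hθ (coord_abs_le (-y))
      intro i
      rw [lp.coeFn_neg, Pi.neg_apply]
      linarith [hy i]
    have h3 : f (-y) = - f y := by rw [map_neg]
    linarith
  · -- extends Cesàro
    intro y c hyc
    have h1 : f y ≤ Nf y := by rw [hfy]; exact hg2 y
    have h2 : Nf y = c := thetaSup_of_hasCesaro hθ hyc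
    have h3 : f (-y) ≤ Nf (-y) := by rw [hfy]; exact hg2 (-y)
    have h4 : Nf (-y) = -c := by
      have hcoe : ⇑(-y) = fun i => -(y i) := by rw [lp.coeFn_neg]; rfl
      simp only [hNf, hcoe]
      exact thetaSup_of_hasCesaro hθ (hasCesaro_neg hyc)
    have h5 : f (-y) = - f y := by rw [map_neg]
    linarith
  · rw [hfy, hgx]

lemma exists_cesex_eq_thetaSup' (x : EllInfty) {θ : ℝ} (hθ : θ ∈ Set.Ioo 0 1) :
    ∃ f : EllInfty →L[ℝ] ℝ, f ∈ Cesex ∧ f x = ThetaSup (⇑x) θ := by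
  by_cases hx0 : x = 0
  · have hne : chi Set.univ ≠ 0 := by
      intro h
      have h1 : chi Set.univ 0 = (1:ℝ) := by simp [chi, chiFun]
      rw [h] at h1
      have h2 : (0 : EllInfty) 0 = (0:ℝ) := by simp [lp.coeFn_zero]
      rw [h2] at h1
      norm_num at h1
    obtain ⟨f, hf, -⟩ := exists_cesex_eq_thetaSup (chi Set.univ) hθ hne
    refine ⟨f, hf, ?_⟩
    subst hx0
    rw [map_zero, thetaSup_coe_zero]
  · exact exists_cesex_eq_thetaSup x hθ hx0

lemma cesex_nonempty : Cesex.Nonempty := by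
  obtain ⟨f, hf, -⟩ := exists_cesex_eq_thetaSup' (0 : EllInfty)
    (⟨by norm_num, by norm_num⟩ : (1/2 : ℝ) ∈ Set.Ioo 0 1)
  exact ⟨f, hf⟩

lemma fC_bddAbove (x : EllInfty) :
    BddAbove ((fun f : EllInfty →L[ℝ] ℝ => f x) '' Cesex) := by
  refine ⟨‖x‖, ?_⟩
  rintro r ⟨f, hf, rfl⟩
  exact cesex_le_norm hf x

lemma thetaSup_le_fC (x : EllInfty) {θ : ℝ} (hθ : θ ∈ Set.Ioo 0 1) :
    ThetaSup (⇑x) θ ≤ fC x := by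
  obtain ⟨f, hf, hfx⟩ := exists_cesex_eq_thetaSup' x hθ
  rw [← hfx]
  exact le_csSup (fC_bddAbove x) ⟨f, hf, rfl⟩


/-! ### The window bound -/

lemma window_bound_exists {x : ℕ → ℝ} {M θ c : ℝ} (hθ : θ ∈ Set.Ioo 0 1)
    (hM : ∀ i, |x i| ≤ M) (hc : ThetaSup x θ < c) :
    ∃ N : ℕ, 1 ≤ N ∧ ∀ n, N ≤ n → WSum x ⌊θ * n⌋₊ n ≤ c * ((n:ℝ) - ⌊θ * n⌋₊) := by
  have h1θ : (0:ℝ) < 1 - θ := by linarith [hθ.2]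
  set c' := (ThetaSup x θ + c) / 2 with hc'
  have hc'1 : ThetaSup x θ < c' := by rw [hc']; linarith
  have hc'2 : c' < c := by rw [hc']; linarith
  have hev : ∀ᶠ n in atTop, Theta x θ n < c' :=
    eventually_lt_of_limsup_lt hc'1 (theta_boundedUnder_le hθ hM)
  obtain ⟨N₀, hN₀⟩ := eventually_atTop.1 hev
  set K := ⌈|c| / ((c - c') * (1 - θ))⌉₊ with hK
  refine ⟨max (max N₀ 1) (K + 1), le_trans (le_max_right _ 1) (le_max_left _ _), fun n hn => ?_⟩
  have hn0 : N₀ ≤ n := le_trans (le_trans (le_max_left _ _) (le_max_left _ _)) hn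
  have hn1 : 1 ≤ n := le_trans (le_trans (le_max_right _ _) (le_max_left _ _)) hn
  have hnK : K + 1 ≤ n := le_trans (le_max_right _ _) hn
  have hnpos : (0:ℝ) < n := by exact_mod_cast hn1
  set m := ⌊θ * n⌋₊ with hm
  have hmθ : (m : ℝ) ≤ θ * n := Nat.floor_le (mul_nonneg hθ.1.le (Nat.cast_nonneg n))
  have hmθ' : θ * n - 1 < (m : ℝ) := by
    have := Nat.lt_floor_add_one (θ * n)
    linarith
  have hth := hN₀ n hn0
  rw [theta_eq hθ, ← hm] at hth
  have hden : (0:ℝ) < (n:ℝ) * (1 - θ) := by positivity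
  have hW : WSum x m n < c' * ((n:ℝ) * (1 - θ)) := by
    rw [div_lt_iff₀ hden] at hth
    linarith
  have hq : |c| / ((c - c') * (1 - θ)) ≤ (n:ℝ) := by
    refine le_trans (Nat.le_ceil _) ?_
    have : (K : ℝ) ≤ n := Nat.cast_le.2 (by omega)
    exact this
  have hq2 : |c| ≤ (n:ℝ) * ((c - c') * (1 - θ)) := by
    rw [div_le_iff₀ (mul_pos (by linarith : (0:ℝ) < c - c') h1θ)] at hq
    linarith
  -- c * (θn - m) ≥ -|c|
  have hcm : -|c| ≤ c * (θ * n - m) := by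
    nlinarith [mul_nonneg (by linarith [neg_abs_le c] : (0:ℝ) ≤ c + |c|)
        (by linarith : (0:ℝ) ≤ θ * n - (m:ℝ)),
      mul_nonneg (by linarith [le_abs_self c] : (0:ℝ) ≤ |c| - c)
        (by linarith : (0:ℝ) ≤ 1 - (θ * n - (m:ℝ))), neg_abs_le c, le_abs_self c]
  have hid : c * ((n:ℝ) - m) = c * ((n:ℝ) * (1 - θ)) + c * (θ * n - m) := by ring
  nlinarith [hW, hcm, hq2]

/-! ### The recursive grid -/

lemma exists_grid (θ : ℕ → ℝ) (hθIoo : ∀ j, θ j ∈ Set.Ioo (0:ℝ) 1) (N : ℕ → ℕ)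
    (hN1 : ∀ j, 1 ≤ N j) :
    ∃ b J : ℕ → ℕ,
      (∀ k, 1 ≤ b k) ∧ (∀ k, b k < b (k+1)) ∧ (∀ k, N (J k) ≤ b (k+1)) ∧
      (∀ k, ⌊θ (J k) * ((b (k+1) : ℕ) : ℝ)⌋₊ = b k) ∧
      (∀ k, ((b (k+1) : ℕ) : ℝ) < (b k : ℝ) / θ (J k) + 1) ∧
      (∀ m, ∃ K, ∀ k, K ≤ k → m ≤ J k) := by
  classical
  set step : ℕ × ℕ → ℕ × ℕ := fun p =>
    (⌈(p.1 : ℝ) / θ p.2⌉₊, if N (p.2 + 1) ≤ ⌈(p.1 : ℝ) / θ p.2⌉₊ then p.2 + 1 else p.2)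
    with hstep
  set P : ℕ → ℕ × ℕ := fun k => Nat.rec (N 0, 0) (fun _ p => step p) k with hP
  set b : ℕ → ℕ := fun k => (P k).1 with hb
  set J : ℕ → ℕ := fun k => (P k).2 with hJ
  have hb0 : b 0 = N 0 := rfl
  have hJ0 : J 0 = 0 := rfl
  have hbsucc : ∀ k, b (k+1) = ⌈(b k : ℝ) / θ (J k)⌉₊ := fun k => rfl
  have hJsucc : ∀ k, J (k+1) = if N (J k + 1) ≤ b (k+1) then J k + 1 else J k := fun k => rfl
  have hceil_gt : ∀ (a j : ℕ), 1 ≤ a → a < ⌈(a:ℝ) / θ j⌉₊ := by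
    intro a j ha
    rw [Nat.lt_ceil, lt_div_iff₀ (hθIoo j).1]
    have h1 : (1:ℝ) ≤ a := by exact_mod_cast ha
    nlinarith [(hθIoo j).2, (hθIoo j).1]
  have hInv : ∀ k, 1 ≤ b k ∧ N (J k) ≤ b k := by
    intro k
    induction k with
    | zero => exact ⟨hN1 0, le_of_eq hb0.symm⟩
    | succ k ih =>
      have hlt : b k < b (k+1) := by
        rw [hbsucc k]; exact hceil_gt _ _ ih.1
      constructor
      · omega
      · rw [hJsucc k]
        split_ifs with h
        · exact h
        · exact le_trans ih.2 hlt.le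
  have hblt : ∀ k, b k < b (k+1) := fun k => by
    rw [hbsucc k]; exact hceil_gt _ _ (hInv k).1
  have hNJ : ∀ k, N (J k) ≤ b (k+1) := fun k => le_trans (hInv k).2 (hblt k).le
  have hfloor : ∀ k, ⌊θ (J k) * ((b (k+1) : ℕ) : ℝ)⌋₊ = b k := by
    intro k
    have hθj := hθIoo (J k)
    have h1 : ((b k : ℝ)) / θ (J k) ≤ (⌈(b k:ℝ) / θ (J k)⌉₊ : ℝ) := Nat.le_ceil _
    have h2 : (⌈(b k:ℝ) / θ (J k)⌉₊ : ℝ) < (b k:ℝ) / θ (J k) + 1 :=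
      Nat.ceil_lt_add_one (div_nonneg (Nat.cast_nonneg _) (hθIoo (J k)).1.le)
    have hdiv : θ (J k) * ((b k:ℝ) / θ (J k)) = b k := by
      rw [mul_comm]
      exact div_mul_cancel₀ _ (hθIoo (J k)).1.ne'
    rw [hbsucc k, Nat.floor_eq_iff (mul_nonneg hθj.1.le (Nat.cast_nonneg _))]
    constructor
    · have := mul_le_mul_of_nonneg_left h1 hθj.1.le
      rw [hdiv] at this
      exact this
    · have := mul_lt_mul_of_pos_left h2 hθj.1
      rw [mul_add, hdiv, mul_one] at this
      linarith [hθj.2]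
  have hP5 : ∀ k, ((b (k+1) : ℕ) : ℝ) < (b k : ℝ) / θ (J k) + 1 := by
    intro k
    rw [hbsucc k]
    exact Nat.ceil_lt_add_one (div_nonneg (Nat.cast_nonneg _) (hθIoo (J k)).1.le)
  have hJmono : ∀ k, J k ≤ J (k+1) := by
    intro k
    rw [hJsucc k]
    split_ifs <;> omega
  have hJmono' : Monotone J := monotone_nat_of_le_succ hJmono
  have hbmono : StrictMono b := strictMono_nat_of_lt_succ hblt
  have hP6 : ∀ m, ∃ K, ∀ k, K ≤ k → m ≤ J k := by
    intro m
    induction m with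
    | zero => exact ⟨0, fun k _ => Nat.zero_le _⟩
    | succ m ih =>
      obtain ⟨K, hK⟩ := ih
      refine ⟨max K (N (m+1)) + 1, fun k hk => ?_⟩
      obtain ⟨k', rfl⟩ : ∃ k', k = k' + 1 := ⟨k - 1, by omega⟩
      have hk'K : K ≤ k' := by omega
      have hk'N : N (m+1) ≤ k' := by omega
      have hJk' : m ≤ J k' := hK k' hk'K
      have hbk' : N (m+1) ≤ b (k'+1) := by
        have h1 : k' ≤ b k' := hbmono.le_apply
        have h2 := hblt k'
        omega
      by_cases hcase : m < J k'
      · exact le_trans hcase (hJmono k')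
      · have hJm : J k' = m := le_antisymm (by omega) hJk'
        rw [hJsucc k', hJm, if_pos hbk']
  exact ⟨b, J, fun k => (hInv k).1, hblt, hNJ, hfloor, hP5, hP6⟩

/-! ### The padding construction -/

/-- Index of the grid window containing `i`. -/
def KF (b : ℕ → ℕ) (i : ℕ) : ℕ := Nat.findGreatest (fun k => b k < i) i

/-- Constant added on window `k`. -/
def zF (x : ℕ → ℝ) (c : ℝ) (b : ℕ → ℕ) (k : ℕ) : ℝ :=
  c - WSum x (b k) (b (k+1)) / ((b (k+1) : ℝ) - b k)

/-- The padded sequence. -/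
def yFun (x : ℕ → ℝ) (c : ℝ) (b : ℕ → ℕ) : ℕ → ℝ := fun i =>
  if i ≤ b 0 then x i else x i + zF x c b (KF b i)

lemma KF_eq {b : ℕ → ℕ} (hbmono : StrictMono b) {k i : ℕ} (h1 : b k < i)
    (h2 : i ≤ b (k+1)) : KF b i = k := by
  have hk_le : k ≤ i := le_trans hbmono.le_apply h1.le
  have hge : k ≤ KF b i := Nat.le_findGreatest hk_le h1
  have hle : KF b i ≤ k := by
    by_contra hcon
    push_neg at hcon
    have hPK : b (KF b i) < i := by
      have hne : KF b i ≠ 0 := by omega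
      exact Nat.findGreatest_of_ne_zero (P := fun k => b k < i) (n := i) (m := KF b i) rfl hne
    have : b (k+1) ≤ b (KF b i) := hbmono.monotone hcon
    omega
  omega

lemma KF_window {b : ℕ → ℕ} (hbmono : StrictMono b) {i : ℕ} (h : b 0 < i) :
    b (KF b i) < i ∧ i ≤ b (KF b i + 1) := by
  have h0 : b (KF b i) < i := by
    rcases Nat.eq_zero_or_pos (KF b i) with h1 | h1
    · rw [h1]; exact h
    · exact Nat.findGreatest_of_ne_zero (P := fun k => b k < i) (n := i) (m := KF b i) rfl h1.ne'
  refine ⟨h0, ?_⟩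
  by_contra hcon
  push_neg at hcon
  have hle : KF b i + 1 ≤ i := by
    have h9 : KF b i ≤ b (KF b i) := hbmono.le_apply
    omega
  exact absurd hcon
    (Nat.findGreatest_is_greatest (P := fun k => b k < i) (n := i)
      (Nat.lt_succ_self (KF b i)) hle)

lemma KF_large {b : ℕ → ℕ} (hbmono : StrictMono b) {K i : ℕ} (h : b K < i) :
    K ≤ KF b i :=
  Nat.le_findGreatest (le_trans hbmono.le_apply h.le) h

lemma yFun_window {x : ℕ → ℝ} {c : ℝ} {b : ℕ → ℕ} (hbmono : StrictMono b) {k i : ℕ}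
    (h1 : b k < i) (h2 : i ≤ b (k+1)) : yFun x c b i = x i + zF x c b k := by
  have hb0 : b 0 ≤ b k := hbmono.monotone (Nat.zero_le k)
  have : ¬ i ≤ b 0 := by omega
  rw [yFun, if_neg this, KF_eq hbmono h1 h2]

/-- The main construction lemma: the padded sequence dominates `x`,
is bounded, and has Cesàro mean `c`. -/
lemma yFun_works {x : ℕ → ℝ} {M c : ℝ} (hM : ∀ i, |x i| ≤ M)
    {θ : ℕ → ℝ} (hθIoo : ∀ j, θ j ∈ Set.Ioo (0:ℝ) 1)
    (hθhalf : ∀ j, (1:ℝ)/2 ≤ θ j) (hθgap : ∀ j, 1 - θ j ≤ 1/((j:ℝ)+2))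
    {b J : ℕ → ℕ} (hb1 : ∀ k, 1 ≤ b k) (hblt : ∀ k, b k < b (k+1))
    (hfloor : ∀ k, ⌊θ (J k) * ((b (k+1) : ℕ) : ℝ)⌋₊ = b k)
    (hP5 : ∀ k, ((b (k+1) : ℕ) : ℝ) < (b k : ℝ) / θ (J k) + 1)
    (hP6 : ∀ m, ∃ K, ∀ k, K ≤ k → m ≤ J k)
    (hwin : ∀ k, WSum x (b k) (b (k+1)) ≤ c * ((b (k+1) : ℝ) - b k)) :
    (∀ i, x i ≤ yFun x c b i) ∧ (∀ i, |yFun x c b i| ≤ M + (|c| + M)) ∧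
      HasCesaro (yFun x c b) c := by
  have hM0 : 0 ≤ M := (abs_nonneg _).trans (hM 0)
  have hbmono : StrictMono b := strictMono_nat_of_lt_succ hblt
  have hL0 : ∀ k, (0:ℝ) < (b (k+1) : ℝ) - b k := by
    intro k
    have h := hblt k
    have : (b k : ℝ) < b (k+1) := by exact_mod_cast h
    linarith
  have hz0 : ∀ k, 0 ≤ zF x c b k := by
    intro k
    rw [zF, sub_nonneg, div_le_iff₀ (hL0 k)]
    exact hwin k
  have hzabs : ∀ k, |WSum x (b k) (b (k+1)) / ((b (k+1) : ℝ) - b k)| ≤ M := by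
    intro k
    rw [abs_div, abs_of_pos (hL0 k), div_le_iff₀ (hL0 k)]
    exact abs_wsum_le hM (hblt k).le
  have hzle : ∀ k, zF x c b k ≤ |c| + M := by
    intro k
    rw [zF]
    have h1 := (abs_le.1 (hzabs k)).1
    have h2 := le_abs_self c
    linarith
  -- (1) domination
  have hdom : ∀ i, x i ≤ yFun x c b i := by
    intro i
    rw [yFun]
    split_ifs with h
    · exact le_rfl
    · linarith [hz0 (KF b i)]
  -- (2) boundedness
  have hbound : ∀ i, |yFun x c b i| ≤ M + (|c| + M) := by
    intro i
    rw [yFun]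
    split_ifs with h
    · have h1 := hM i
      have h2 := abs_nonneg c
      linarith
    · calc |x i + zF x c b (KF b i)| ≤ |x i| + |zF x c b (KF b i)| := abs_add_le _ _
        _ ≤ M + (|c| + M) := by
            have h1 := hz0 (KF b i)
            have h2 := hzle (KF b i)
            rw [abs_of_nonneg h1]
            linarith [hM i]
  -- (3) window sums of y
  have hYwin : ∀ k, WSum (yFun x c b) (b k) (b (k+1)) = c * ((b (k+1) : ℝ) - b k) := by
    intro k
    have h1 : ∀ i ∈ Finset.Ioc (b k) (b (k+1)), yFun x c b i = x i + zF x c b k := by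
      intro i hi
      rw [Finset.mem_Ioc] at hi
      exact yFun_window hbmono hi.1 hi.2
    have h2 : WSum (yFun x c b) (b k) (b (k+1))
        = WSum x (b k) (b (k+1)) + ((b (k+1) : ℝ) - b k) * zF x c b k := by
      unfold WSum
      rw [Finset.sum_congr rfl h1, Finset.sum_add_distrib, Finset.sum_const,
        Nat.card_Ioc, nsmul_eq_mul, Nat.cast_sub (hblt k).le]
    rw [h2, zF]
    have hDne : ((b (k+1) : ℝ) - b k) ≠ 0 := (hL0 k).ne'
    field_simp
    ring
  -- (4) telescoped sums
  have hYtel : ∀ k, WSum (yFun x c b) (b 0) (b k) = c * ((b k : ℝ) - b 0) := by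
    intro k
    induction k with
    | zero => simp [WSum]
    | succ k ih =>
      have hmono0k : b 0 ≤ b k := hbmono.monotone (Nat.zero_le k)
      rw [← wsum_add (yFun x c b) hmono0k (hblt k).le, ih, hYwin k]
      ring
  -- (5) deviation on partial windows
  have hyc : ∀ k i, b k < i → i ≤ b (k+1) → |yFun x c b i - c| ≤ 2 * M := by
    intro k i h1 h2
    rw [yFun_window hbmono h1 h2, zF]
    have h3 : x i + (c - WSum x (b k) (b (k+1)) / ((b (k+1) : ℝ) - b k)) - c
        = x i - WSum x (b k) (b (k+1)) / ((b (k+1) : ℝ) - b k) := by ring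
    rw [h3]
    calc |x i - WSum x (b k) (b (k+1)) / ((b (k+1) : ℝ) - b k)|
        ≤ |x i| + |WSum x (b k) (b (k+1)) / ((b (k+1) : ℝ) - b k)| := by
          rw [sub_eq_add_neg]
          exact (abs_add_le _ _).trans (le_of_eq (by rw [abs_neg]))
      _ ≤ 2 * M := by linarith [hM i, hzabs k]
  have hpart : ∀ k n, b k < n → n ≤ b (k+1) →
      |WSum (yFun x c b) (b k) n - c * ((n:ℝ) - b k)| ≤ 2 * M * ((b (k+1) : ℝ) - b k) := by
    intro k n h1 h2
    have e : WSum (yFun x c b) (b k) n - c * ((n:ℝ) - b k)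
        = ∑ i ∈ Finset.Ioc (b k) n, (yFun x c b i - c) := by
      rw [Finset.sum_sub_distrib, Finset.sum_const, Nat.card_Ioc, nsmul_eq_mul,
        Nat.cast_sub h1.le, WSum]
      ring
    rw [e]
    calc |∑ i ∈ Finset.Ioc (b k) n, (yFun x c b i - c)|
        ≤ ∑ i ∈ Finset.Ioc (b k) n, |yFun x c b i - c| := Finset.abs_sum_le_sum_abs _ _
      _ ≤ ∑ _i ∈ Finset.Ioc (b k) n, (2 * M) := by
          apply Finset.sum_le_sum
          intro i hi
          rw [Finset.mem_Ioc] at hi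
          exact hyc k i hi.1 (le_trans hi.2 h2)
      _ = 2 * M * ((n : ℝ) - b k) := by
          rw [Finset.sum_const, Nat.card_Ioc, nsmul_eq_mul, Nat.cast_sub h1.le, mul_comm]
      _ ≤ 2 * M * ((b (k+1) : ℝ) - b k) := by
          have h5 : (n : ℝ) ≤ b (k+1) := Nat.cast_le.2 h2
          have h6 : (0:ℝ) ≤ 2 * M := by linarith
          nlinarith
  -- (6) window length bound
  have hLbd : ∀ k n, b k < n →
      ((b (k+1) : ℝ) - b k) ≤ (2*(n:ℝ)+1) / ((J k : ℝ) + 2) + 1 := by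
    intro k n hkn
    have hθj := hθIoo (J k)
    have hD : (0:ℝ) < (J k : ℝ) + 2 := by positivity
    have hfl := hfloor k
    have hfl1 : θ (J k) * (b (k+1) : ℝ) < b k + 1 := by
      have h := Nat.lt_floor_add_one (θ (J k) * ((b (k+1) : ℕ) : ℝ))
      rw [hfl] at h
      exact_mod_cast h
    have hbk1 : (b (k+1) : ℝ) < 2 * (b k : ℝ) + 1 := by
      have h5 := hP5 k
      have hhalf := hθhalf (J k)
      have hbkpos : (1:ℝ) ≤ b k := by exact_mod_cast hb1 k
      have hd2 : (b k : ℝ) / θ (J k) ≤ 2 * b k := by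
        rw [div_le_iff₀ hθj.1]
        nlinarith
      linarith
    have hbn : (b k : ℝ) ≤ n := by
      have : (b k : ℝ) < n := by exact_mod_cast hkn
      linarith
    have hLk : ((b (k+1) : ℝ) - b k) < (b (k+1) : ℝ) * (1 - θ (J k)) + 1 := by
      nlinarith
    have hgap := hθgap (J k)
    have hb1pos : (0:ℝ) ≤ (b (k+1) : ℝ) := Nat.cast_nonneg _
    have h7 : (b (k+1) : ℝ) * (1 - θ (J k)) ≤ (2*(n:ℝ)+1) * (1/((J k : ℝ)+2)) := by
      have h8 : (b (k+1) : ℝ) ≤ 2*(n:ℝ)+1 := by nlinarith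
      have h9 : (0:ℝ) ≤ 1 - θ (J k) := by linarith [hθj.2]
      have h10 : (0:ℝ) < 1/((J k : ℝ)+2) := by positivity
      nlinarith
    have h11 : (2*(n:ℝ)+1) * (1/((J k : ℝ)+2)) = (2*(n:ℝ)+1)/((J k : ℝ)+2) := by ring
    linarith [h11.le]
  -- (7) J ∘ KF tends to infinity
  have hJK : Tendsto (fun n => J (KF b n)) atTop atTop := by
    rw [tendsto_atTop_atTop]
    intro m
    obtain ⟨K, hK⟩ := hP6 m
    refine ⟨b K + 1, fun n hn => ?_⟩
    have h1 : b K < n := by omega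
    exact hK _ (KF_large hbmono h1)
  -- (8) the Cesàro limit
  have hces : HasCesaro (yFun x c b) c := by
    show Tendsto (cesaroAvg (yFun x c b)) atTop (𝓝 c)
    rw [← tendsto_sub_nhds_zero_iff]
    set A : ℝ := |WSum (yFun x c b) 0 (b 0) - c * b 0| with hA
    have hgto : Tendsto (fun n : ℕ => (A + 2*M) / (n:ℝ) + 6*M/((J (KF b n) : ℝ) + 2))
        atTop (𝓝 0) := by
      have t1 : Tendsto (fun n : ℕ => (A + 2*M) / (n:ℝ)) atTop (𝓝 0) :=
        tendsto_const_div_atTop_nhds_zero_nat _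
      have t2 : Tendsto (fun n : ℕ => ((J (KF b n) : ℝ) + 2)) atTop atTop :=
        tendsto_atTop_add_const_right _ 2 (tendsto_natCast_atTop_atTop.comp hJK)
      have t3 : Tendsto (fun n : ℕ => 6*M/((J (KF b n) : ℝ) + 2)) atTop (𝓝 0) :=
        Tendsto.div_atTop tendsto_const_nhds t2
      have t4 := t1.add t3
      rw [add_zero] at t4
      exact t4
    apply squeeze_zero_norm' _ hgto
    filter_upwards [eventually_gt_atTop (b 0)] with n hn
    obtain ⟨hk1, hk2⟩ := KF_window hbmono hn
    have hn1 : 1 ≤ n := by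
      have := hb1 0
      omega
    have hnpos : (0:ℝ) < n := by exact_mod_cast hn1
    have hn1' : (1:ℝ) ≤ (n:ℝ) := by exact_mod_cast hn1
    have hb0n : b 0 ≤ b (KF b n) := hbmono.monotone (Nat.zero_le _)
    have hD : (0:ℝ) < (J (KF b n) : ℝ) + 2 := by positivity
    have hdecomp : WSum (yFun x c b) 0 n
        = WSum (yFun x c b) 0 (b 0) + c * ((b (KF b n) : ℝ) - b 0)
          + WSum (yFun x c b) (b (KF b n)) n := by
      rw [← wsum_add (yFun x c b) (Nat.zero_le (b 0)) (le_trans hb0n hk1.le),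
        ← wsum_add (yFun x c b) hb0n hk1.le, hYtel (KF b n)]
      ring
    have hkey : |WSum (yFun x c b) 0 n - c * n|
        ≤ A + 2 * M * ((b (KF b n + 1) : ℝ) - b (KF b n)) := by
      have e : WSum (yFun x c b) 0 n - c * n
          = (WSum (yFun x c b) 0 (b 0) - c * b 0)
            + (WSum (yFun x c b) (b (KF b n)) n - c * ((n:ℝ) - b (KF b n))) := by
        rw [hdecomp]; ring
      rw [e]
      calc |(WSum (yFun x c b) 0 (b 0) - c * b 0)
            + (WSum (yFun x c b) (b (KF b n)) n - c * ((n:ℝ) - b (KF b n)))|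
          ≤ A + |WSum (yFun x c b) (b (KF b n)) n - c * ((n:ℝ) - b (KF b n))| := by
            rw [hA]; exact abs_add_le _ _
        _ ≤ A + 2 * M * ((b (KF b n + 1) : ℝ) - b (KF b n)) := by
            linarith [hpart (KF b n) n hk1 hk2]
    have hkey2 : |WSum (yFun x c b) 0 n - c * n|
        ≤ A + 2*M + 6*M*(n:ℝ)/((J (KF b n) : ℝ)+2) := by
      have hLb := hLbd (KF b n) n hk1
      have h1 : 2 * M * ((b (KF b n + 1) : ℝ) - b (KF b n))
          ≤ 2*M*((2*(n:ℝ)+1)/((J (KF b n) : ℝ)+2) + 1) :=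
        mul_le_mul_of_nonneg_left hLb (by linarith)
      have h2 : 2*M*((2*(n:ℝ)+1)/((J (KF b n) : ℝ)+2) + 1)
          = 2*M*(2*(n:ℝ)+1)/((J (KF b n) : ℝ)+2) + 2*M := by ring
      have h3 : 2*M*(2*(n:ℝ)+1)/((J (KF b n) : ℝ)+2)
          ≤ 6*M*(n:ℝ)/((J (KF b n) : ℝ)+2) := by
        rw [div_le_div_iff₀ hD hD]
        nlinarith [mul_nonneg (mul_nonneg hM0 (by linarith [hn1'] : (0:ℝ) ≤ (n:ℝ) - 1)) hD.le]
      linarith [hkey]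
    have hq : cesaroAvg (yFun x c b) n - c = (WSum (yFun x c b) 0 n - c * n) / n := by
      rw [cesaroAvg_eq, sub_div, mul_div_assoc, div_self hnpos.ne', mul_one]
    rw [Real.norm_eq_abs, hq, abs_div, abs_of_pos hnpos, div_le_iff₀ hnpos]
    have e2 : ((A + 2*M) / (n:ℝ) + 6*M/((J (KF b n) : ℝ) + 2)) * n
        = (A + 2*M) + 6*M*(n:ℝ)/((J (KF b n) : ℝ)+2) := by
      field_simp
    rw [e2]
    linarith [hkey2]
  exact ⟨hdom, hbound, hces⟩


/-- Every `f ∈ Cesex` is bounded by any `c` that eventually dominates `ThetaSup`. -/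
lemma cesex_le_main (x : EllInfty) {f : EllInfty →L[ℝ] ℝ} (hf : f ∈ Cesex) {c : ℝ}
    (hc : ∀ j : ℕ, ∃ ϑ : ℝ, ϑ ∈ Set.Ioo (1 - 1/((j:ℝ)+2)) 1 ∧ ThetaSup (⇑x) ϑ < c) :
    f x ≤ c := by
  classical
  have hM : ∀ i, |x i| ≤ ‖x‖ := coord_abs_le x
  choose θ hθmem hθsup using hc
  have hgap0 : ∀ j : ℕ, (1:ℝ)/2 ≤ 1 - 1/((j:ℝ)+2) := by
    intro j
    have h2 : (2:ℝ) ≤ (j:ℝ)+2 := by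
      have : (0:ℝ) ≤ j := Nat.cast_nonneg j
      linarith
    have h3 : 1/((j:ℝ)+2) ≤ 1/2 := one_div_le_one_div_of_le (by norm_num) h2
    linarith
  have hθhalf : ∀ j, (1:ℝ)/2 ≤ θ j := fun j => le_trans (hgap0 j) (hθmem j).1.le
  have hθIoo : ∀ j, θ j ∈ Set.Ioo (0:ℝ) 1 := fun j =>
    ⟨lt_of_lt_of_le (by norm_num) (hθhalf j), (hθmem j).2⟩
  have hθgap : ∀ j, 1 - θ j ≤ 1/((j:ℝ)+2) := fun j => by linarith [(hθmem j).1]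
  choose N hN1 hNw using fun j => window_bound_exists (hθIoo j) hM (hθsup j)
  obtain ⟨b, J, hb1, hblt, hNJ, hfloor, hP5, hP6⟩ := exists_grid θ hθIoo N hN1
  have hwin : ∀ k, WSum (⇑x) (b k) (b (k+1)) ≤ c * ((b (k+1) : ℝ) - b k) := by
    intro k
    have h := hNw (J k) (b (k+1)) (hNJ k)
    rw [hfloor k] at h
    exact h
  obtain ⟨hdom, hbound, hces⟩ :=
    yFun_works hM hθIoo hθhalf hθgap hb1 hblt hfloor hP5 hP6 hwin
  have hymem : Memℓp (yFun (⇑x) c b) ⊤ := by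
    apply memℓp_infty
    refine ⟨‖x‖ + (|c| + ‖x‖), ?_⟩
    rintro r ⟨i, rfl⟩
    show ‖yFun (⇑x) c b i‖ ≤ ‖x‖ + (|c| + ‖x‖)
    rw [Real.norm_eq_abs]
    exact hbound i
  refine cesex_le_of_dominated hf (Y := (⟨yFun (⇑x) c b, hymem⟩ : EllInfty))
    (fun n => ?_) ?_
  · exact hdom n
  · exact hces

end Stmt13Aux

/-- For every `x ∈ ℓ∞` one has `t(x) = f_C(x)`. -/
theorem stmt13 (x : EllInfty) : tFun (⇑x) = fC x := by
  classical
  have hmem : ∀ᶠ ϑ in 𝓝[<] (1:ℝ), ϑ ∈ Set.Ioo (0:ℝ) 1 :=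
    Ioo_mem_nhdsLT_of_mem (Set.mem_Ioc.2 ⟨zero_lt_one, le_refl 1⟩)
  have habs : ∀ᶠ ϑ in 𝓝[<] (1:ℝ), |ThetaSup (⇑x) ϑ| ≤ ‖x‖ :=
    hmem.mono fun ϑ hϑ => Stmt13Aux.thetaSup_abs_le hϑ (Stmt13Aux.coord_abs_le x)
  have hBle : IsBoundedUnder (· ≤ ·) (𝓝[<] (1:ℝ)) (ThetaSup (⇑x)) :=
    isBoundedUnder_of_eventually_le (habs.mono fun ϑ h => (abs_le.1 h).2)
  have hBge : IsBoundedUnder (· ≥ ·) (𝓝[<] (1:ℝ)) (ThetaSup (⇑x)) :=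
    isBoundedUnder_of_eventually_ge (habs.mono fun ϑ h => (abs_le.1 h).1)
  set L := liminf (ThetaSup (⇑x)) (𝓝[<] (1:ℝ)) with hL
  have ha : ∀ f : EllInfty →L[ℝ] ℝ, f ∈ Cesex → f x ≤ L := by
    intro f hf
    refine le_of_forall_pos_le_add fun ε hε => ?_
    apply Stmt13Aux.cesex_le_main x hf
    intro j
    have hfreq : ∃ᶠ ϑ in 𝓝[<] (1:ℝ), ThetaSup (⇑x) ϑ < L + ε :=
      frequently_lt_of_liminf_lt hBle.isCoboundedUnder_ge (by rw [← hL]; linarith)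
    have hlt : 1 - 1/((j:ℝ)+2) < 1 := by
      have : (0:ℝ) < 1/((j:ℝ)+2) := by positivity
      linarith
    have hset : Set.Ioo (1 - 1/((j:ℝ)+2)) 1 ∈ 𝓝[<] (1:ℝ) := Ioo_mem_nhdsLT hlt
    obtain ⟨ϑ, hϑ1, hϑ2⟩ :=
      (hfreq.and_eventually (eventually_of_mem hset fun ϑ h => h)).exists
    exact ⟨ϑ, hϑ2, hϑ1⟩
  have hne : ((fun f : EllInfty →L[ℝ] ℝ => f x) '' Cesex).Nonempty :=
    Stmt13Aux.cesex_nonempty.image _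
  have hfCle : fC x ≤ L := by
    apply csSup_le hne
    rintro r ⟨f, hf, rfl⟩
    exact ha f hf
  have hgle : ∀ᶠ ϑ in 𝓝[<] (1:ℝ), ThetaSup (⇑x) ϑ ≤ fC x :=
    hmem.mono fun ϑ hϑ => Stmt13Aux.thetaSup_le_fC x hϑ
  have hlimsup_le : limsup (ThetaSup (⇑x)) (𝓝[<] (1:ℝ)) ≤ fC x :=
    limsup_le_of_le hBge.isCoboundedUnder_le hgle
  have hinfsup : L ≤ limsup (ThetaSup (⇑x)) (𝓝[<] (1:ℝ)) := by
    rw [hL]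
    exact liminf_le_limsup hBle hBge
  have hLeq : L = fC x := le_antisymm (le_trans hinfsup hlimsup_le) hfCle
  have hsupeq : limsup (ThetaSup (⇑x)) (𝓝[<] (1:ℝ)) = L :=
    le_antisymm (hLeq ▸ hlimsup_le) hinfsup
  have htends : Tendsto (ThetaSup (⇑x)) (𝓝[<] (1:ℝ)) (𝓝 L) :=
    tendsto_of_liminf_eq_limsup hL.symm hsupeq hBle hBge
  show limUnder (𝓝[<] (1:ℝ)) (ThetaSup (⇑x)) = fC x
  rw [htends.limUnder_eq]
  exact hLeq
end
end

section
/- Let (θ_k) be any sequence in (0,1) with θ_k → 1⁻ and let ℱ be any free ultrafilter on ℕ. Then for every x ∈ ℓ∞, t(x) = sup_{𝒢 ∈ βℕ*} ℱ-lim_k ( 𝒢-lim_n Θ_{θ_k,n}(x) ), the supremum being taken over all free ultrafilters 𝒢 on ℕ. -/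
open Filter Topology

noncomputable section

namespace Aux

def Xp (y : ℕ → ℝ) (n : ℕ) : ℝ := ∑ i ∈ Finset.Ioc 0 n, y i

def sG (y : ℕ → ℝ) : ℝ := sSup (ThetaSup y '' Set.Ioo 0 1)

theorem theta_sum (y : ℕ → ℝ) {τ : ℝ} (hτ : 0 ≤ τ) (n : ℕ) :
    Theta y τ n = (∑ i ∈ Finset.Ioc (⌊τ * n⌋₊) n, y i) / (n * (1 - τ)) := by
  unfold Theta
  congr 1
  rw [← Finset.sum_filter]
  congr 1
  ext i
  simp only [Finset.mem_filter, Finset.mem_Icc, Finset.mem_Ioc]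
  have h0 : (0:ℝ) ≤ τ * n := by positivity
  constructor
  · rintro ⟨⟨-, h2⟩, h3⟩
    exact ⟨(Nat.floor_lt h0).2 h3, h2⟩
  · rintro ⟨h1, h2⟩
    exact ⟨⟨Nat.one_le_iff_ne_zero.2 (by rintro rfl; exact Nat.not_lt_zero _ h1), h2⟩,
      (Nat.floor_lt h0).1 h1⟩

theorem Xp_diff (y : ℕ → ℝ) {m n : ℕ} (h : m ≤ n) :
    Xp y n - Xp y m = ∑ i ∈ Finset.Ioc m n, y i := by
  have := Finset.sum_Ioc_consecutive y (Nat.zero_le m) h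
  unfold Xp
  linarith

theorem sum_Ioc_abs {y : ℕ → ℝ} {C : ℝ} (hC : ∀ i, |y i| ≤ C) {m n : ℕ} (h : m ≤ n) :
    |∑ i ∈ Finset.Ioc m n, y i| ≤ C * ((n : ℝ) - m) := by
  calc |∑ i ∈ Finset.Ioc m n, y i| ≤ ∑ i ∈ Finset.Ioc m n, |y i| :=
        Finset.abs_sum_le_sum_abs _ _
    _ ≤ ∑ _i ∈ Finset.Ioc m n, C := Finset.sum_le_sum fun i _ => hC i
    _ = ((Finset.Ioc m n).card : ℝ) * C := by rw [Finset.sum_const, nsmul_eq_mul]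
    _ = C * ((n : ℝ) - m) := by
        rw [Nat.card_Ioc, Nat.cast_sub h]; ring

theorem floor_le_self {τ : ℝ} (hτ0 : 0 ≤ τ) (hτ1 : τ ≤ 1) (n : ℕ) : ⌊τ * n⌋₊ ≤ n := by
  have : τ * n ≤ n := by nlinarith [Nat.cast_nonneg (α := ℝ) n]
  calc ⌊τ * n⌋₊ ≤ ⌊(n:ℝ)⌋₊ := Nat.floor_le_floor this
    _ = n := Nat.floor_natCast n

theorem theta_abs_le {y : ℕ → ℝ} {C : ℝ} (hC : ∀ i, |y i| ≤ C) {τ : ℝ}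
    (hτ : τ ∈ Set.Ioo (0:ℝ) 1) {n : ℕ} (hn : 1 ≤ n) :
    |Theta y τ n| ≤ C + C / ((n : ℝ) * (1 - τ)) := by
  obtain ⟨hτ0, hτ1⟩ := hτ
  have hC0 : 0 ≤ C := le_trans (abs_nonneg _) (hC 0)
  have hn0 : (0:ℝ) < n := by exact_mod_cast hn
  have hd : (0:ℝ) < (n : ℝ) * (1 - τ) := by nlinarith
  rw [theta_sum y hτ0.le n, abs_div, abs_of_pos hd]
  rw [div_le_iff₀ hd]
  have hfl : ⌊τ * n⌋₊ ≤ n := floor_le_self hτ0.le hτ1.le n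
  have h1 : |∑ i ∈ Finset.Ioc (⌊τ * n⌋₊) n, y i| ≤ C * ((n : ℝ) - ⌊τ * n⌋₊) :=
    sum_Ioc_abs hC hfl
  have h2 : τ * n - 1 < (⌊τ * n⌋₊ : ℝ) := by
    have := Nat.lt_floor_add_one (τ * n); linarith
  have hdne : ((n : ℝ) * (1 - τ)) ≠ 0 := ne_of_gt hd
  have : (C + C / ((n : ℝ) * (1 - τ))) * ((n:ℝ) * (1 - τ)) = C * ((n:ℝ) * (1-τ)) + C := by
    field_simp
  rw [this]
  nlinarith

theorem theta_abs_le_global {y : ℕ → ℝ} {C : ℝ} (hC : ∀ i, |y i| ≤ C) {τ : ℝ}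
    (hτ : τ ∈ Set.Ioo (0:ℝ) 1) (n : ℕ) :
    |Theta y τ n| ≤ C + C / (1 - τ) := by
  have hC0 : 0 ≤ C := le_trans (abs_nonneg _) (hC 0)
  have h1τ : (0:ℝ) < 1 - τ := by linarith [hτ.2]
  rcases Nat.eq_zero_or_pos n with rfl | hn
  · have : Theta y τ 0 = 0 := by
      simp [Theta]
    rw [this, abs_zero]; positivity
  · refine le_trans (theta_abs_le hC hτ hn) ?_
    have hn1 : (1:ℝ) ≤ (n:ℝ) := by exact_mod_cast hn
    have : C / ((n : ℝ) * (1 - τ)) ≤ C / (1 - τ) := by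
      apply div_le_div_of_nonneg_left hC0 h1τ
      nlinarith
    linarith

theorem theta_eventually_le {y : ℕ → ℝ} {C : ℝ} (hC : ∀ i, |y i| ≤ C) {τ : ℝ}
    (hτ : τ ∈ Set.Ioo (0:ℝ) 1) :
    ∀ᶠ n in atTop, |Theta y τ n| ≤ C + 1 := by
  have hC0 : 0 ≤ C := le_trans (abs_nonneg _) (hC 0)
  have h1τ : (0:ℝ) < 1 - τ := by linarith [hτ.2]
  filter_upwards [eventually_ge_atTop (max 1 ⌈C / (1 - τ)⌉₊)] with n hn
  have hn1 : 1 ≤ n := le_trans (le_max_left _ _) hn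
  have hn2 : C / (1 - τ) ≤ (n:ℝ) := by
    have : ⌈C / (1 - τ)⌉₊ ≤ n := le_trans (le_max_right _ _) hn
    exact le_trans (Nat.le_ceil _) (by exact_mod_cast this)
  have hn0 : (0:ℝ) < n := by exact_mod_cast hn1
  refine le_trans (theta_abs_le hC hτ hn1) ?_
  have : C / ((n : ℝ) * (1 - τ)) ≤ 1 := by
    rw [div_le_one (by nlinarith)]
    calc C = (C / (1 - τ)) * (1 - τ) := by field_simp
      _ ≤ (n:ℝ) * (1 - τ) := by nlinarith
  linarith

theorem theta_boundedUnder_le {y : ℕ → ℝ} {C : ℝ} (hC : ∀ i, |y i| ≤ C) {τ : ℝ}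
    (hτ : τ ∈ Set.Ioo (0:ℝ) 1) :
    IsBoundedUnder (· ≤ ·) atTop (Theta y τ) :=
  isBoundedUnder_of ⟨C + C / (1 - τ), fun n => (abs_le.1 (theta_abs_le_global hC hτ n)).2⟩

theorem theta_boundedUnder_ge {y : ℕ → ℝ} {C : ℝ} (hC : ∀ i, |y i| ≤ C) {τ : ℝ}
    (hτ : τ ∈ Set.Ioo (0:ℝ) 1) :
    IsBoundedUnder (· ≥ ·) atTop (Theta y τ) :=
  isBoundedUnder_of ⟨-(C + C / (1 - τ)), fun n => neg_le_of_abs_le (theta_abs_le_global hC hτ n)⟩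

theorem thetaSup_le {y : ℕ → ℝ} {C : ℝ} (hC : ∀ i, |y i| ≤ C) {τ : ℝ}
    (hτ : τ ∈ Set.Ioo (0:ℝ) 1) : ThetaSup y τ ≤ C + 1 :=
  limsup_le_of_le (theta_boundedUnder_ge hC hτ).isCoboundedUnder_le
    ((theta_eventually_le hC hτ).mono fun n h => (abs_le.1 h).2)

theorem le_thetaSup {y : ℕ → ℝ} {C : ℝ} (hC : ∀ i, |y i| ≤ C) {τ : ℝ}
    (hτ : τ ∈ Set.Ioo (0:ℝ) 1) : -(C + 1) ≤ ThetaSup y τ :=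
  le_limsup_of_frequently_le
    (((theta_eventually_le hC hτ).mono fun n h => neg_le_of_abs_le h).frequently)
    (theta_boundedUnder_le hC hτ)

theorem sG_nonempty (y : ℕ → ℝ) : (ThetaSup y '' Set.Ioo 0 1).Nonempty :=
  ⟨ThetaSup y (1/2), ⟨1/2, by norm_num, rfl⟩⟩

theorem sG_bddAbove {y : ℕ → ℝ} {C : ℝ} (hC : ∀ i, |y i| ≤ C) :
    BddAbove (ThetaSup y '' Set.Ioo 0 1) := by
  refine ⟨C + 1, ?_⟩
  rintro r ⟨τ, hτ, rfl⟩
  exact thetaSup_le hC hτ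

theorem sG_le {y : ℕ → ℝ} {C : ℝ} (hC : ∀ i, |y i| ≤ C) : sG y ≤ C + 1 :=
  csSup_le (sG_nonempty y) (by rintro r ⟨τ, hτ, rfl⟩; exact thetaSup_le hC hτ)

theorem le_sG {y : ℕ → ℝ} {C : ℝ} (hC : ∀ i, |y i| ≤ C) : -(C+1) ≤ sG y :=
  le_trans (le_thetaSup hC (by norm_num : (1/2:ℝ) ∈ Set.Ioo (0:ℝ) 1))
    (le_csSup (sG_bddAbove hC) ⟨1/2, by norm_num, rfl⟩)

theorem thetaSup_le_sG {y : ℕ → ℝ} {C : ℝ} (hC : ∀ i, |y i| ≤ C) {τ : ℝ}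
    (hτ : τ ∈ Set.Ioo (0:ℝ) 1) : ThetaSup y τ ≤ sG y :=
  le_csSup (sG_bddAbove hC) ⟨τ, hτ, rfl⟩


set_option maxHeartbeats 2000000 in
theorem key {y : ℕ → ℝ} {C : ℝ} (hC : ∀ i, |y i| ≤ C) {ε : ℝ} (hε : 0 < ε) :
    ∃ τ₀ : ℝ, τ₀ ∈ Set.Ioo (0:ℝ) 1 ∧ ∀ T : Finset ℝ, (∀ τ ∈ T, τ₀ ≤ τ ∧ τ < 1) →
      ∀ N₀ : ℕ, ∃ n, N₀ ≤ n ∧ ∀ τ ∈ T, sG y - ε < Theta y τ n := by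
  classical
  have hC0 : 0 ≤ C := le_trans (abs_nonneg _) (hC 0)
  set s := sG y with hs_def
  have hsg : s = sSup (ThetaSup y '' Set.Ioo 0 1) := rfl
  have hsabs : |s| ≤ C + 1 := abs_le.2 ⟨le_sG hC, sG_le hC⟩
  set D : ℝ := C + |s| + 1 with hD_def
  have hD1 : 1 ≤ D := by simp only [hD_def]; linarith [abs_nonneg s]
  have hD0 : 0 < D := lt_of_lt_of_le zero_lt_one hD1
  have hsD : |s| ≤ D := by simp only [hD_def]; linarith
  obtain ⟨r, ⟨θb, hθb, rfl⟩, hr⟩ :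
      ∃ r ∈ ThetaSup y '' Set.Ioo 0 1, s - ε/4 < r :=
    exists_lt_of_lt_csSup (sG_nonempty y) (by rw [← hsg]; linarith)
  have hθb0 : 0 < θb := hθb.1
  have hθb1 : θb < 1 := hθb.2
  have hfreq : ∃ᶠ N in atTop, s - ε/4 < Theta y θb N :=
    frequently_lt_of_lt_limsup (theta_boundedUnder_ge hC hθb).isCoboundedUnder_le hr
  set τ₀ : ℝ := max θb (1 - (ε/4)*(1-θb)/D) with hτ₀_def
  have hτ₀θb : θb ≤ τ₀ := le_max_left _ _
  have hτ₀0 : 0 < τ₀ := lt_of_lt_of_le hθb0 hτ₀θb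
  have hpos4 : 0 < (ε/4)*(1-θb)/D := div_pos (by nlinarith) hD0
  have hτ₀1 : τ₀ < 1 := max_lt hθb1 (by linarith)
  have hDτ₀ : D * (1 - τ₀) ≤ (ε/4)*(1-θb) := by
    have h1 : 1 - (ε/4)*(1-θb)/D ≤ τ₀ := le_max_right _ _
    have h2 : 1 - τ₀ ≤ (ε/4)*(1-θb)/D := by linarith
    have h3 : D * (1 - τ₀) ≤ D * ((ε/4)*(1-θb)/D) :=
      mul_le_mul_of_nonneg_left h2 hD0.le
    have h4 : D * ((ε/4)*(1-θb)/D) = (ε/4)*(1-θb) := by field_simp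
    linarith
  refine ⟨τ₀, ⟨hτ₀0, hτ₀1⟩, ?_⟩
  intro T hT N₀
  by_cases hTne : T.Nonempty
  swap
  · exact ⟨N₀, le_rfl, fun τ hτ => absurd ⟨τ, hτ⟩ hTne⟩
  set τm := T.max' hTne with hτm_def
  have hτmT : τm ∈ T := T.max'_mem hTne
  have hτm1 : τm < 1 := (hT _ hτmT).2
  have hτmτ₀ : τ₀ ≤ τm := (hT _ hτmT).1
  set δ : ℝ := 1 - τm with hδ_def
  have hδ0 : 0 < δ := by simp only [hδ_def]; linarith
  by_contra hcon
  push_neg at hcon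
  have hbad' : ∀ n : ℕ, ∃ τ : ℝ, N₀ ≤ n → τ ∈ T ∧ Theta y τ n ≤ s - ε := by
    intro n
    by_cases h : N₀ ≤ n
    · obtain ⟨τ, h1, h2⟩ := hcon n h
      exact ⟨τ, fun _ => ⟨h1, h2⟩⟩
    · exact ⟨τm, fun h' => absurd h' h⟩
  choose σ hσspec using hbad'
  set Z : ℕ → ℝ := fun n => Xp y n - s * n with hZ_def
  have hZlip : ∀ m n : ℕ, m ≤ n → |Z n - Z m| ≤ D * ((n:ℝ) - m) := by
    intro m n h
    have h1 := sum_Ioc_abs hC h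
    have h2 := Xp_diff y h
    have hmn : (m:ℝ) ≤ n := by exact_mod_cast h
    have e0 : Z n - Z m = (Xp y n - Xp y m) - s * ((n:ℝ) - m) := by
      simp only [hZ_def]; ring
    rw [e0, h2]
    have h3 : |s * ((n:ℝ) - m)| ≤ |s| * ((n:ℝ) - m) := by
      rw [abs_mul, abs_of_nonneg (by linarith : (0:ℝ) ≤ (n:ℝ) - m)]
    have h5 : |s| * ((n:ℝ) - m) ≤ D * ((n:ℝ) - m) :=
      mul_le_mul_of_nonneg_right hsD (by linarith)
    have h6 : C * ((n:ℝ) - m) + |s| * ((n:ℝ) - m) ≤ D * ((n:ℝ) - m) := by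
      have : (C + |s|) * ((n:ℝ) - m) ≤ D * ((n:ℝ) - m) :=
        mul_le_mul_of_nonneg_right (by simp only [hD_def]; linarith) (by linarith)
      linarith [this, (by ring : (C + |s|) * ((n:ℝ) - m) = C * ((n:ℝ) - m) + |s| * ((n:ℝ) - m))]
    calc |(∑ i ∈ Finset.Ioc m n, y i) - s * ((n:ℝ) - m)|
        ≤ |∑ i ∈ Finset.Ioc m n, y i| + |s * ((n:ℝ) - m)| := abs_sub _ _
      _ ≤ D * ((n:ℝ) - m) := by linarith
  have hstep : ∀ n : ℕ, N₀ ≤ n → 1 ≤ n →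
      ⌊σ n * n⌋₊ < n ∧
      Z n - Z ⌊σ n * n⌋₊ ≤ -(ε * ((n:ℝ) - ⌊σ n * n⌋₊)) + (ε + D) ∧
      δ * n ≤ (n:ℝ) - ⌊σ n * n⌋₊ ∧
      τ₀ * n - 1 ≤ (⌊σ n * n⌋₊ : ℝ) := by
    intro n hnN₀ hn1
    obtain ⟨hσT, hσv⟩ := hσspec n hnN₀
    obtain ⟨hστ₀, hσ1⟩ := hT _ hσT
    have hσ0 : 0 < σ n := lt_of_lt_of_le hτ₀0 hστ₀
    have hστm : σ n ≤ τm := T.le_max' _ hσT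
    have hn0 : (0:ℝ) < n := by exact_mod_cast hn1
    have hflo_le : ((⌊σ n * n⌋₊ : ℕ) : ℝ) ≤ σ n * n := Nat.floor_le (by positivity)
    have hflo_gt : σ n * n - 1 < ((⌊σ n * n⌋₊ : ℕ) : ℝ) := by
      have := Nat.lt_floor_add_one (σ n * n); linarith
    have hσnn : σ n * n < n := by nlinarith
    have hlt : ⌊σ n * n⌋₊ < n := by
      have : ((⌊σ n * n⌋₊:ℕ):ℝ) < n := lt_of_le_of_lt hflo_le hσnn
      exact_mod_cast this
    have hd : (0:ℝ) < (n:ℝ) * (1 - σ n) := by nlinarith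
    have hS : Xp y n - Xp y ⌊σ n * n⌋₊ ≤ (s - ε) * ((n:ℝ) * (1 - σ n)) := by
      rw [Xp_diff y hlt.le]
      rw [theta_sum y hσ0.le n, div_le_iff₀ hd] at hσv
      exact hσv
    have hM1 : (n:ℝ) * (1 - σ n) ≤ (n:ℝ) - ⌊σ n * n⌋₊ := by nlinarith
    have hM2 : (n:ℝ) - ⌊σ n * n⌋₊ ≤ (n:ℝ) * (1 - σ n) + 1 := by nlinarith
    have habs : s * (((n:ℝ) * (1 - σ n)) - ((n:ℝ) - ⌊σ n * n⌋₊)) ≤ |s| := by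
      have h1 : |s * (((n:ℝ) * (1 - σ n)) - ((n:ℝ) - ⌊σ n * n⌋₊))| ≤ |s| * 1 := by
        rw [abs_mul]
        apply mul_le_mul_of_nonneg_left _ (abs_nonneg s)
        rw [abs_le]; constructor <;> linarith
      linarith [le_abs_self (s * (((n:ℝ) * (1 - σ n)) - ((n:ℝ) - ⌊σ n * n⌋₊)))]
    refine ⟨hlt, ?_, ?_, ?_⟩
    · have e0 : Z n - Z ⌊σ n * n⌋₊
          = (Xp y n - Xp y ⌊σ n * n⌋₊) - s * ((n:ℝ) - ⌊σ n * n⌋₊) := by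
        simp only [hZ_def]; ring
      have e1 : (s - ε) * ((n:ℝ) * (1 - σ n)) - s * ((n:ℝ) - ⌊σ n * n⌋₊)
          = s * (((n:ℝ) * (1 - σ n)) - ((n:ℝ) - ⌊σ n * n⌋₊)) - ε * ((n:ℝ) * (1 - σ n)) := by
        ring
      have e2 : ε * (((n:ℝ) - ⌊σ n * n⌋₊) - 1) ≤ ε * ((n:ℝ) * (1 - σ n)) :=
        mul_le_mul_of_nonneg_left (by linarith) hε.le
      have e3 : ε * (((n:ℝ) - ⌊σ n * n⌋₊) - 1) = ε * ((n:ℝ) - ⌊σ n * n⌋₊) - ε := by ring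
      rw [e0]
      linarith
    · have e4 : δ * n ≤ (1 - σ n) * n :=
        mul_le_mul_of_nonneg_right (by simp only [hδ_def]; linarith) hn0.le
      have e5 : (1 - σ n) * n = (n:ℝ) * (1 - σ n) := by ring
      linarith
    · have h6 : τ₀ * n ≤ σ n * n := mul_le_mul_of_nonneg_right hστ₀ hn0.le
      linarith
  set T₀ : ℝ := 1 / (δ * θb) with hT₀_def
  have hT₀0 : 0 < T₀ := by rw [hT₀_def]; positivity
  set K₁ : ℝ := 3*D + T₀*(ε+D) with hK₁_def
  have hK₁0 : 0 < K₁ := by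
    have : 0 < T₀*(ε+D) := by positivity
    simp only [hK₁_def]; linarith
  obtain ⟨N₁, hN₁⟩ := exists_nat_ge (max (((N₀:ℝ) + 2)/θb) (2*K₁/(ε*(1-θb)) + 1))
  obtain ⟨N, hNN₁, hNanc⟩ := frequently_atTop.1 hfreq N₁
  have hNN₁' : (N₁:ℝ) ≤ N := by exact_mod_cast hNN₁
  have hNθ : (N₀:ℝ) + 2 ≤ θb * N := by
    have h1 : ((N₀:ℝ) + 2)/θb ≤ (N:ℝ) := le_trans (le_trans (le_max_left _ _) hN₁) hNN₁'
    rw [div_le_iff₀ hθb0] at h1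
    linarith
  have hNK : 2*K₁/(ε*(1-θb)) + 1 ≤ (N:ℝ) :=
    le_trans (le_trans (le_max_right _ _) hN₁) hNN₁'
  set q : ℕ := ⌊θb * (N:ℝ)⌋₊ with hq_def
  have hq_le : (q:ℝ) ≤ θb * N := Nat.floor_le (by positivity)
  have hq_gt : θb * N - 1 < (q:ℝ) := by
    have := Nat.lt_floor_add_one (θb * (N:ℝ)); linarith
  have hN0 : (0:ℝ) < N := by nlinarith
  have hqN : q < N := by
    have : (q:ℝ) < N := by nlinarith
    exact_mod_cast this
  have hN₀q : N₀ ≤ q := by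
    have : (N₀:ℝ) < q := by linarith
    exact_mod_cast this.le
  set c : ℕ → ℕ := fun t => (fun n => ⌊σ n * n⌋₊)^[t] N with hc_def
  have hc0 : c 0 = N := rfl
  have hcsucc : ∀ t, c (t+1) = ⌊σ (c t) * (c t)⌋₊ := by
    intro t; simp only [hc_def, Function.iterate_succ_apply']
  have hcross : ∃ t, c t ≤ q := by
    by_contra hno
    push_neg at hno
    have hdec : ∀ t, c t + t ≤ N := by
      intro t
      induction t with
      | zero => simp [hc0]
      | succ t ih =>
        have h1 : q < c t := hno t
        have h2 : ⌊σ (c t) * (c t)⌋₊ < c t :=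
          (hstep (c t) (by omega) (by omega)).1
        rw [hcsucc t]
        omega
    have := hdec (N+1)
    omega
  set t' : ℕ := Nat.find hcross with ht'_def
  have hct' : c t' ≤ q := Nat.find_spec hcross
  have hmin : ∀ t, t < t' → q < c t := by
    intro t ht
    by_contra h
    push_neg at h
    have h2 : t' ≤ t := Nat.find_le h
    omega
  have ht'0 : 0 < t' := by
    rcases Nat.eq_zero_or_pos t' with h | h
    · exfalso
      have := hct'
      rw [h, hc0] at this
      omega
    · exact h
  have hnode : ∀ t, t < t' → N₀ ≤ c t ∧ 1 ≤ c t := by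
    intro t ht
    have := hmin t ht
    omega
  have hE : ∀ t, t ≤ t' →
      Z N - Z (c t) ≤ -(ε * ((N:ℝ) - c t)) + t*(ε+D) ∧
      (t:ℝ) * (δ*((q:ℝ)+1)) ≤ (N:ℝ) - c t := by
    intro t
    induction t with
    | zero => intro _; rw [hc0]; constructor <;> simp
    | succ t ih =>
      intro ht
      have htlt : t < t' := by omega
      obtain ⟨ih1, ih2⟩ := ih (by omega)
      obtain ⟨hnN₀, hn1⟩ := hnode t htlt
      obtain ⟨hlt, hdrop, hsize, -⟩ := hstep (c t) hnN₀ hn1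
      rw [← hcsucc t] at hlt hdrop hsize
      have hq1 : (q:ℝ) + 1 ≤ c t := by
        have := hmin t htlt
        have : q + 1 ≤ c t := this
        exact_mod_cast this
      have hsize' : δ*((q:ℝ)+1) ≤ (c t:ℝ) - c (t+1) := by
        have h1 : δ * ((q:ℝ)+1) ≤ δ * (c t) := mul_le_mul_of_nonneg_left hq1 hδ0.le
        linarith
      constructor
      · have e1 : ε*((N:ℝ) - c t) + ε*((c t:ℝ) - c (t+1)) = ε*((N:ℝ) - c (t+1)) := by ring
        have e2 : (((t+1:ℕ)):ℝ)*(ε+D) = (t:ℝ)*(ε+D) + (ε+D) := by push_cast; ring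
        rw [e2]
        linarith
      · have e3 : (((t+1:ℕ)):ℝ)*(δ*((q:ℝ)+1)) = (t:ℝ)*(δ*((q:ℝ)+1)) + δ*((q:ℝ)+1) := by
          push_cast; ring
        rw [e3]
        linarith
  obtain ⟨hE1, hE2⟩ := hE t' le_rfl
  have hqθ : θb * N < (q:ℝ) + 1 := by linarith
  have ht'T₀ : (t':ℝ) ≤ T₀ := by
    have h1 : (t':ℝ) * (δ*((q:ℝ)+1)) ≤ N := by
      have h0 : (0:ℝ) ≤ (c t' : ℝ) := Nat.cast_nonneg _
      linarith
    have h2 : δ * (θb * N) ≤ δ*((q:ℝ)+1) := mul_le_mul_of_nonneg_left hqθ.le hδ0.le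
    have h3 : (t':ℝ) * (δ * (θb * N)) ≤ N :=
      le_trans (mul_le_mul_of_nonneg_left h2 (Nat.cast_nonneg _)) h1
    rw [hT₀_def, le_div_iff₀ (by positivity)]
    have h4 : (t':ℝ) * (δ * (θb * N)) = ((t':ℝ) * (δ * θb)) * N := by ring
    rw [h4] at h3
    have h5 : ((t':ℝ) * (δ * θb)) * N ≤ 1 * N := by linarith
    exact le_of_mul_le_mul_right h5 hN0
  have hanc : -((ε/4)*((1-θb)*N)) - D ≤ Z N - Z q := by
    have hd : (0:ℝ) < (N:ℝ) * (1 - θb) := by nlinarith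
    have hS : (s - ε/4) * ((N:ℝ) * (1 - θb)) ≤ Xp y N - Xp y q := by
      rw [Xp_diff y hqN.le]
      rw [theta_sum y hθb0.le N, lt_div_iff₀ hd] at hNanc
      linarith
    have hZeq : Z N - Z q = (Xp y N - Xp y q) - s * ((N:ℝ) - q) := by
      simp only [hZ_def]; ring
    have hM1 : (N:ℝ) * (1 - θb) ≤ (N:ℝ) - q := by nlinarith
    have hM2 : (N:ℝ) - q ≤ (N:ℝ) * (1 - θb) + 1 := by nlinarith
    have habs : -|s| ≤ s * (((N:ℝ) * (1 - θb)) - ((N:ℝ) - q)) := by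
      have h1 : |s * (((N:ℝ) * (1 - θb)) - ((N:ℝ) - q))| ≤ |s| * 1 := by
        rw [abs_mul]
        apply mul_le_mul_of_nonneg_left _ (abs_nonneg s)
        rw [abs_le]; constructor <;> linarith
      linarith [neg_abs_le (s * (((N:ℝ) * (1 - θb)) - ((N:ℝ) - q)))]
    have e1 : (s - ε/4) * ((N:ℝ) * (1 - θb)) - s * ((N:ℝ) - q)
        = s * (((N:ℝ) * (1 - θb)) - ((N:ℝ) - q)) - (ε/4) * ((N:ℝ) * (1 - θb)) := by ring
    have e2 : (ε/4) * ((N:ℝ) * (1 - θb)) = (ε/4)*((1-θb)*(N:ℝ)) := by ring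
    rw [hZeq]
    linarith
  have htail : -(D*((1-τ₀)*N + 2)) ≤ Z q - Z (c t') := by
    obtain ⟨t'', ht''⟩ : ∃ t'', t' = t'' + 1 := ⟨t' - 1, by omega⟩
    have ht''lt : t'' < t' := by omega
    obtain ⟨hnN₀, hn1⟩ := hnode t'' ht''lt
    obtain ⟨-, -, -, hlow⟩ := hstep (c t'') hnN₀ hn1
    rw [← hcsucc t''] at hlow
    rw [ht''] at hct' hE2 ⊢
    have hq1 : (q:ℝ) + 1 ≤ c t'' := by
      have h := hmin t'' (by omega)
      have : q + 1 ≤ c t'' := h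
      exact_mod_cast this
    have hct'low : τ₀ * ((q:ℝ)+1) - 1 ≤ (c (t''+1) : ℝ) := by
      have h1 : τ₀ * ((q:ℝ)+1) ≤ τ₀ * (c t'') := mul_le_mul_of_nonneg_left hq1 hτ₀0.le
      linarith
    have hqc : (q:ℝ) - c (t''+1) ≤ (1-τ₀)*q + 1 := by
      have e1 : τ₀ * ((q:ℝ)+1) = τ₀*q + τ₀ := by ring
      have e2 : (1-τ₀)*(q:ℝ) = q - τ₀*q := by ring
      linarith
    have hqN' : (q:ℝ) ≤ N := by nlinarith
    have h2 : (1-τ₀)*(q:ℝ) ≤ (1-τ₀)*N := mul_le_mul_of_nonneg_left hqN' (by linarith)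
    have habs := hZlip (c (t''+1)) q hct'
    have h3 : D * ((q:ℝ) - c (t''+1)) ≤ D * ((1-τ₀)*N + 2) :=
      mul_le_mul_of_nonneg_left (by linarith) hD0.le
    linarith [neg_abs_le (Z q - Z (c (t''+1))), abs_le.1 habs]
  have hfin1 : Z N - Z (c t') ≤ -(ε * ((1-θb) * N)) + T₀*(ε+D) := by
    have hcq : (c t' : ℝ) ≤ q := by exact_mod_cast hct'
    have h2 : (1-θb)*(N:ℝ) ≤ (N:ℝ) - q := by
      have e : (1-θb)*(N:ℝ) = N - θb*N := by ring
      linarith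
    have h3 : ε * ((1-θb)*N) ≤ ε * ((N:ℝ) - c t') :=
      mul_le_mul_of_nonneg_left (by linarith) hε.le
    have h4 : (t':ℝ)*(ε+D) ≤ T₀*(ε+D) :=
      mul_le_mul_of_nonneg_right ht'T₀ (by linarith)
    linarith
  have hfin2 : -((ε/4)*((1-θb)*N)) - D - D*((1-τ₀)*N + 2) ≤ Z N - Z (c t') := by
    have e : Z N - Z (c t') = (Z N - Z q) + (Z q - Z (c t')) := by ring
    rw [e]
    have hcomb := add_le_add hanc htail
    linarith [hcomb]
  have hcontr : (ε/2) * ((1-θb)*(N:ℝ)) ≤ K₁ := by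
    have hDτN : D*(1-τ₀)*(N:ℝ) ≤ (ε/4)*(1-θb)*(N:ℝ) :=
      mul_le_mul_of_nonneg_right hDτ₀ hN0.le
    have e1 : (ε/4)*((1-θb)*(N:ℝ)) = (1/4)*(ε*((1-θb)*(N:ℝ))) := by ring
    have e2 : (ε/2)*((1-θb)*(N:ℝ)) = (1/2)*(ε*((1-θb)*(N:ℝ))) := by ring
    have e3 : D*((1-τ₀)*(N:ℝ) + 2) = D*(1-τ₀)*(N:ℝ) + 2*D := by ring
    have e4 : (ε/4)*(1-θb)*(N:ℝ) = (1/4)*(ε*((1-θb)*(N:ℝ))) := by ring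
    have hK : K₁ = 3*D + T₀*(ε+D) := hK₁_def
    have hchain := le_trans hfin2 hfin1
    rw [e1, e3] at hchain
    have h5 : D*(1-τ₀)*(N:ℝ) ≤ (1/4)*(ε * ((1 - θb) * (N:ℝ))) := by
      rw [← e4]; exact hDτN
    rw [e2]
    set XX := ε * ((1 - θb) * (N:ℝ)) with hXX
    set YY := D*(1-τ₀)*(N:ℝ) with hYY
    set WW := T₀*(ε+D) with hWW
    clear_value XX YY WW
    linarith [hchain, h5, hK]
  have hBpos : (0:ℝ) < ε*(1-θb) := by nlinarith
  have hlt : 2*K₁/(ε*(1-θb)) < N := by linarith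
  rw [div_lt_iff₀ hBpos] at hlt
  have efin : (N:ℝ) * (ε*(1-θb)) = 2*((ε/2)*((1-θb)*(N:ℝ))) := by ring
  set UU := (N:ℝ) * (ε*(1-θb)) with hUU
  set VV := (ε/2)*((1-θb)*(N:ℝ)) with hVV
  clear_value UU VV
  linarith [hlt, hcontr, efin]

theorem ulim_spec (G : Ultrafilter ℕ) {y : ℕ → ℝ} {B : ℝ}
    (hB : ∀ᶠ n in (G : Filter ℕ), |y n| ≤ B) :
    Tendsto y (G : Filter ℕ) (𝓝 (limUnder (G : Filter ℕ) y)) := by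
  have hev : ∀ᶠ n in (G : Filter ℕ), y n ∈ Set.Icc (-B) B :=
    hB.mono fun n h => Set.mem_Icc.2 (abs_le.1 h)
  have hmem : (Ultrafilter.map y G : Filter ℝ) ≤ 𝓟 (Set.Icc (-B) B) := by
    rw [Ultrafilter.coe_map, le_principal_iff, mem_map]
    exact hev
  obtain ⟨a, -, hle⟩ := isCompact_Icc.ultrafilter_le_nhds (Ultrafilter.map y G) hmem
  rw [Ultrafilter.coe_map] at hle
  have ht : Tendsto y (G : Filter ℕ) (𝓝 a) := hle
  rw [ht.limUnder_eq]
  exact ht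

theorem free_le_atTop {G : Ultrafilter ℕ} (h : (G : Filter ℕ) ≤ cofinite) :
    (G : Filter ℕ) ≤ atTop := by rw [← Nat.cofinite_eq_atTop]; exact h

theorem ulim_le_sG {y : ℕ → ℝ} {C : ℝ} (hC : ∀ i, |y i| ≤ C) {G : Ultrafilter ℕ}
    (hfree : (G : Filter ℕ) ≤ cofinite) {τ : ℝ} (hτ : τ ∈ Set.Ioo (0:ℝ) 1) :
    limUnder (G : Filter ℕ) (Theta y τ) ≤ sG y := by
  have ht := ulim_spec G (Eventually.of_forall (theta_abs_le_global hC hτ))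
  have h1 : limUnder (G : Filter ℕ) (Theta y τ) ≤ ThetaSup y τ := by
    refine le_of_forall_pos_le_add fun ε hε => ?_
    have hlt : limsup (Theta y τ) atTop < ThetaSup y τ + ε :=
      lt_add_of_pos_right (ThetaSup y τ) hε
    have h2 : ∀ᶠ n in atTop, Theta y τ n < ThetaSup y τ + ε :=
      eventually_lt_of_limsup_lt hlt (theta_boundedUnder_le hC hτ)
    have h3 : ∀ᶠ n in (G : Filter ℕ), Theta y τ n < ThetaSup y τ + ε :=
      h2.filter_mono (free_le_atTop hfree)
    exact le_of_tendsto ht (h3.mono fun n h => h.le)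
  exact le_trans h1 (thetaSup_le_sG hC hτ)

theorem ulim_abs_le {y : ℕ → ℝ} {C : ℝ} (hC : ∀ i, |y i| ≤ C) {G : Ultrafilter ℕ}
    (hfree : (G : Filter ℕ) ≤ cofinite) {τ : ℝ} (hτ : τ ∈ Set.Ioo (0:ℝ) 1) :
    |limUnder (G : Filter ℕ) (Theta y τ)| ≤ C + 1 := by
  have ht := ulim_spec G (Eventually.of_forall (theta_abs_le_global hC hτ))
  have h1 : ∀ᶠ n in (G : Filter ℕ), |Theta y τ n| ≤ C + 1 :=
    (theta_eventually_le hC hτ).filter_mono (free_le_atTop hfree)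
  exact abs_le.2 ⟨ge_of_tendsto ht (h1.mono fun n h => (abs_le.1 h).1),
    le_of_tendsto ht (h1.mono fun n h => (abs_le.1 h).2)⟩

theorem tendsto_thetaSup {y : ℕ → ℝ} {C : ℝ} (hC : ∀ i, |y i| ≤ C) :
    Tendsto (ThetaSup y) (𝓝[<] (1:ℝ)) (𝓝 (sG y)) := by
  rw [Metric.tendsto_nhds]
  intro ε hε
  obtain ⟨τ₀, hτ₀, hkey⟩ := key hC (half_pos hε)
  filter_upwards [Ioo_mem_nhdsLT_of_mem (⟨hτ₀.2, le_refl (1:ℝ)⟩ : (1:ℝ) ∈ Set.Ioc τ₀ 1)]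
    with θ hθ
  have hθ01 : θ ∈ Set.Ioo (0:ℝ) 1 := ⟨lt_trans hτ₀.1 hθ.1, hθ.2⟩
  have hup : ThetaSup y θ ≤ sG y := thetaSup_le_sG hC hθ01
  have hfr : ∃ᶠ n in atTop, sG y - ε/2 ≤ Theta y θ n := by
    rw [frequently_atTop]
    intro N₀
    obtain ⟨n, hn, hall⟩ := hkey {θ} (by
      intro τ hτ
      rw [Finset.mem_singleton] at hτ
      subst hτ
      exact ⟨hθ.1.le, hθ.2⟩) N₀
    exact ⟨n, hn, (hall θ (Finset.mem_singleton_self θ)).le⟩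
  have hlow : sG y - ε/2 ≤ ThetaSup y θ :=
    le_limsup_of_frequently_le hfr (theta_boundedUnder_le hC hθ01)
  rw [Real.dist_eq, abs_sub_lt_iff]
  constructor <;> linarith

theorem exists_good_G {y : ℕ → ℝ} {C : ℝ} (hC : ∀ i, |y i| ≤ C)
    (θs : ℕ → ℝ) (hθ : ∀ k, θs k ∈ Set.Ioo (0 : ℝ) 1)
    (hθlim : Tendsto θs atTop (𝓝 1)) {ε : ℝ} (hε : 0 < ε) :
    ∃ G : Ultrafilter ℕ, (G : Filter ℕ) ≤ cofinite ∧ ∃ K : ℕ, ∀ k, K ≤ k →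
      sG y - ε ≤ limUnder (G : Filter ℕ) (fun n => Theta y (θs k) n) := by
  obtain ⟨τ₀, hτ₀, hkey⟩ := key hC hε
  obtain ⟨K, hK⟩ := (eventually_atTop).1 ((tendsto_order.1 hθlim).1 τ₀ hτ₀.2)
  set E : ℕ → Set ℕ :=
    fun m => {n | m ≤ n ∧ ∀ k, K ≤ k → k ≤ m → sG y - ε < Theta y (θs k) n} with hE_def
  have hEne : ∀ m, (E m).Nonempty := by
    intro m
    obtain ⟨n, hn, hall⟩ := hkey (Finset.image θs (Finset.Icc K m)) (by
      intro τ hτmem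
      rw [Finset.mem_image] at hτmem
      obtain ⟨k, hk, rfl⟩ := hτmem
      rw [Finset.mem_Icc] at hk
      exact ⟨(hK k hk.1).le, (hθ k).2⟩) m
    refine ⟨n, hn, fun k hk1 hk2 => hall (θs k) ?_⟩
    rw [Finset.mem_image]
    exact ⟨k, Finset.mem_Icc.2 ⟨hk1, hk2⟩, rfl⟩
  have hEanti : ∀ m m', m ≤ m' → E m' ⊆ E m := by
    intro m m' hmm n hn
    exact ⟨le_trans hmm hn.1, fun k h1 h2 => hn.2 k h1 (le_trans h2 hmm)⟩
  have hdir : Directed (· ≥ ·) (fun m => (𝓟 (E m) : Filter ℕ)) := by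
    intro m m'
    exact ⟨max m m', principal_mono.2 (hEanti _ _ (le_max_left _ _)),
      principal_mono.2 (hEanti _ _ (le_max_right _ _))⟩
  have hNeBot : (⨅ m, (𝓟 (E m) : Filter ℕ)).NeBot :=
    iInf_neBot_of_directed hdir (fun m => principal_neBot_iff.2 (hEne m))
  set G : Ultrafilter ℕ := @Ultrafilter.of ℕ (⨅ m, 𝓟 (E m)) hNeBot with hG_def
  have hGle : (G : Filter ℕ) ≤ ⨅ m, 𝓟 (E m) := Ultrafilter.of_le _
  have hEG : ∀ m, E m ∈ (G : Filter ℕ) := by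
    intro m
    exact hGle (mem_iInf_of_mem m (mem_principal_self _))
  have hfree : (G : Filter ℕ) ≤ cofinite := by
    rw [Nat.cofinite_eq_atTop]
    intro u hu
    obtain ⟨m, hm⟩ := mem_atTop_sets.1 hu
    exact mem_of_superset (hEG m) (fun n hn => hm n hn.1)
  refine ⟨G, hfree, K, fun k hk => ?_⟩
  have ht := ulim_spec G (Eventually.of_forall (theta_abs_le_global hC (hθ k)))
  refine ge_of_tendsto ht ?_
  have h1 : ∀ᶠ n in (G : Filter ℕ), n ∈ E k := eventually_iff.2 (hEG k)
  exact h1.mono fun n hn => (hn.2 k hk le_rfl).le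


end Aux

/-- For any sequence `θ_k → 1⁻` in `(0,1)`, any free ultrafilter `ℱ` and any `x ∈ ℓ∞`,
`t(x) = sup_{𝒢 ∈ βℕ*} ℱ-lim_k 𝒢-lim_n Θ_{θ_k,n}(x)`. -/
theorem stmt14 (θs : ℕ → ℝ) (hθ : ∀ k, θs k ∈ Set.Ioo (0 : ℝ) 1)
    (hθlim : Tendsto θs atTop (𝓝 1)) (F : Ultrafilter ℕ) (hF : IsFreeUltrafilter F)
    (x : EllInfty) :
    tFun (⇑x) = sSup {r : ℝ | ∃ G : Ultrafilter ℕ, IsFreeUltrafilter G ∧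
      r = ulim F (fun k => ulim G (fun n => Theta (⇑x) (θs k) n))} := by
  classical
  obtain ⟨C, hCub⟩ := memℓp_infty_iff.1 (lp.memℓp x)
  have hC : ∀ i, |(⇑x : ℕ → ℝ) i| ≤ C := by
    intro i
    have h := hCub (Set.mem_range_self i)
    rwa [Real.norm_eq_abs] at h
  set y : ℕ → ℝ := ⇑x with hy
  set A := {r : ℝ | ∃ G : Ultrafilter ℕ, IsFreeUltrafilter G ∧
      r = ulim F (fun k => ulim G (fun n => Theta y (θs k) n))} with hA
  have hub : ∀ r ∈ A, r ≤ Aux.sG y := by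
    rintro r ⟨G, hG, rfl⟩
    have hvb : ∀ k, |ulim G (fun n => Theta y (θs k) n)| ≤ C + 1 := fun k =>
      Aux.ulim_abs_le hC hG (hθ k)
    have htv : Tendsto (fun k => ulim G (fun n => Theta y (θs k) n)) (F : Filter ℕ)
        (𝓝 (limUnder (F : Filter ℕ) (fun k => ulim G (fun n => Theta y (θs k) n)))) :=
      Aux.ulim_spec F (Eventually.of_forall hvb)
    refine le_of_tendsto htv (Eventually.of_forall fun k => ?_)
    exact Aux.ulim_le_sG hC hG (hθ k)
  have hlow : ∀ ε : ℝ, 0 < ε → ∃ r ∈ A, Aux.sG y - ε ≤ r := by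
    intro ε hε
    obtain ⟨G, hGfree, K, hGK⟩ := Aux.exists_good_G hC θs hθ hθlim hε
    have hvb : ∀ k, |ulim G (fun n => Theta y (θs k) n)| ≤ C + 1 := fun k =>
      Aux.ulim_abs_le hC hGfree (hθ k)
    have htv : Tendsto (fun k => ulim G (fun n => Theta y (θs k) n)) (F : Filter ℕ)
        (𝓝 (limUnder (F : Filter ℕ) (fun k => ulim G (fun n => Theta y (θs k) n)))) :=
      Aux.ulim_spec F (Eventually.of_forall hvb)
    refine ⟨_, ⟨G, hGfree, rfl⟩, ?_⟩
    refine ge_of_tendsto htv ?_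
    have h1 : ∀ᶠ k in (F : Filter ℕ), K ≤ k :=
      (eventually_ge_atTop K).filter_mono (Aux.free_le_atTop hF)
    exact h1.mono fun k hk => hGK k hk
  have hAne : A.Nonempty := by
    obtain ⟨r, hr, -⟩ := hlow 1 one_pos
    exact ⟨r, hr⟩
  have hAbdd : BddAbove A := ⟨Aux.sG y, fun r hr => hub r hr⟩
  have hsup : sSup A = Aux.sG y := by
    refine le_antisymm (csSup_le hAne hub) ?_
    refine le_of_forall_pos_le_add fun ε hε => ?_
    obtain ⟨r, hrA, hr⟩ := hlow ε hε
    have h2 := le_csSup hAbdd hrA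
    linarith
  have htf : tFun y = Aux.sG y := (Aux.tendsto_thetaSup hC).limUnder_eq
  rw [htf, ← hsup]
end
end

section
/- For every x ∈ ℓ∞ and every infinite set A ⊆ ℕ, the function φ : (0,1) → ℝ defined by φ(θ) = liminf_{n∈A, n→∞} Θ_{θ,n}(x) is continuous; in fact |φ(θ+δ) − φ(θ)| ≤ 2δ‖x‖∞/(1−θ) whenever θ ∈ (0,1) and 0 < δ < 1−θ. -/
open Filter Topology

noncomputable section

/-- Window sum bound. -/
lemma sum_window (x : ℕ → ℝ) (B : ℝ) (hB : ∀ i, |x i| ≤ B) (n : ℕ) (s t : ℝ)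
    (hs : 0 ≤ s) (hst : s ≤ t) :
    |∑ i ∈ Finset.Icc 1 n,
      ((if s < (i:ℝ) then x i else 0) - (if t < (i:ℝ) then x i else 0))| ≤ (t - s + 1) * B := by
  have hrw : ∀ i ∈ Finset.Icc 1 n,
      ((if s < (i:ℝ) then x i else 0) - (if t < (i:ℝ) then x i else 0))
        = (if s < (i:ℝ) ∧ (i:ℝ) ≤ t then x i else 0) := by
    intro i _
    by_cases h1 : s < (i:ℝ) <;> by_cases h2 : t < (i:ℝ)
    · have : ¬ ((i:ℝ) ≤ t) := not_le.mpr h2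
      simp [h1, h2, this]
    · simp [h1, not_lt.mp h2]
    · exact absurd (hst.trans_lt h2) h1
    · simp [h1, h2]
  rw [Finset.sum_congr rfl hrw, ← Finset.sum_filter]
  set F := (Finset.Icc 1 n).filter (fun i : ℕ => s < (i:ℝ) ∧ (i:ℝ) ≤ t) with hF
  have hcard : (F.card : ℝ) ≤ t - s + 1 := by
    have hsub : F ⊆ Finset.Ioc ⌊s⌋₊ ⌊t⌋₊ := by
      intro i hi
      rw [hF, Finset.mem_filter] at hi
      exact Finset.mem_Ioc.mpr ⟨(Nat.floor_lt hs).mpr hi.2.1, Nat.le_floor hi.2.2⟩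
    have h1 : F.card ≤ ⌊t⌋₊ - ⌊s⌋₊ := by
      simpa [Nat.card_Ioc] using Finset.card_le_card hsub
    have h2 : ((⌊t⌋₊ - ⌊s⌋₊ : ℕ) : ℝ) = (⌊t⌋₊ : ℝ) - (⌊s⌋₊ : ℝ) :=
      Nat.cast_sub (Nat.floor_mono hst)
    have h3 : (⌊t⌋₊ : ℝ) ≤ t := Nat.floor_le (hs.trans hst)
    have h4 : s - 1 < (⌊s⌋₊ : ℝ) := Nat.sub_one_lt_floor s
    have := (Nat.cast_le (α := ℝ)).mpr h1
    rw [h2] at this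
    linarith
  have hB0 : 0 ≤ B := le_trans (abs_nonneg _) (hB 0)
  calc |∑ i ∈ F, x i| ≤ ∑ i ∈ F, |x i| := Finset.abs_sum_le_sum_abs _ _
    _ ≤ F.card • B := Finset.sum_le_card_nsmul _ _ _ (fun i _ => hB i)
    _ = (F.card : ℝ) * B := nsmul_eq_mul _ _
    _ ≤ (t - s + 1) * B := by gcongr

/-- single-sum bound, reusing the window lemma with `t = n`. -/
lemma sum_tail (x : ℕ → ℝ) (B : ℝ) (hB : ∀ i, |x i| ≤ B) (n : ℕ) (s : ℝ)
    (hs : 0 ≤ s) (hsn : s ≤ (n : ℝ)) :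
    |∑ i ∈ Finset.Icc 1 n, (if s < (i:ℝ) then x i else 0)| ≤ ((n : ℝ) - s + 1) * B := by
  have hrw : ∀ i ∈ Finset.Icc 1 n,
      (if s < (i:ℝ) then x i else 0)
        = ((if s < (i:ℝ) then x i else 0) - (if (n:ℝ) < (i:ℝ) then x i else 0)) := by
    intro i hi
    have : ¬ ((n:ℝ) < (i:ℝ)) := by
      exact_mod_cast not_lt.mpr (Finset.mem_Icc.mp hi).2
    simp [this]
  rw [Finset.sum_congr rfl hrw]
  exact sum_window x B hB n s (n : ℝ) hs hsn

lemma theta_abs_le (x : ℕ → ℝ) (B : ℝ) (hB : ∀ i, |x i| ≤ B) {θ : ℝ}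
    (hθ : θ ∈ Set.Ioo (0:ℝ) 1) (n : ℕ) :
    |Theta x θ n| ≤ B + B / (1 - θ) := by
  have hB0 : 0 ≤ B := le_trans (abs_nonneg _) (hB 0)
  have h1θ : 0 < 1 - θ := by linarith [hθ.2]
  rcases Nat.eq_zero_or_pos n with rfl | hn
  · simp only [Theta, Nat.cast_zero, zero_mul, div_zero]
    rw [abs_zero]; positivity
  · have hn1 : (1:ℝ) ≤ (n:ℝ) := by exact_mod_cast hn
    have hnpos : (0:ℝ) < n := by linarith
    have hs : 0 ≤ θ * n := mul_nonneg hθ.1.le (Nat.cast_nonneg n)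
    have hsn : θ * n ≤ (n:ℝ) := by nlinarith [hθ.2.le]
    have hnum := sum_tail x B hB n (θ * n) hs hsn
    have hden : (0:ℝ) < (n:ℝ) * (1 - θ) := by positivity
    rw [Theta, abs_div, abs_of_pos hden]
    rw [div_le_iff₀ hden]
    have key : ((n:ℝ) - θ * n + 1) * B ≤ (B + B / (1 - θ)) * ((n:ℝ) * (1 - θ)) := by
      have e1 : ((n:ℝ) - θ * n + 1) * B = ((n:ℝ) * (1 - θ)) * B + B := by ring
      have e2 : (B + B / (1 - θ)) * ((n:ℝ) * (1 - θ))
          = ((n:ℝ) * (1 - θ)) * B + (n:ℝ) * B := by field_simp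
      rw [e1, e2]
      nlinarith
    exact hnum.trans key

lemma theta_diff_le (x : ℕ → ℝ) (B : ℝ) (hB : ∀ i, |x i| ≤ B) {θ δ : ℝ}
    (hθ : θ ∈ Set.Ioo (0:ℝ) 1) (hδ : 0 < δ) (hδ' : δ < 1 - θ) {n : ℕ} (hn : 0 < n) :
    |Theta x (θ + δ) n - Theta x θ n|
      ≤ 2 * δ * B / (1 - θ) + (B / (1 - θ - δ) + B / (1 - θ)) / n := by
  have hB0 : 0 ≤ B := le_trans (abs_nonneg _) (hB 0)
  have h1θ : 0 < 1 - θ := by linarith [hθ.2]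
  have h1θ' : 0 < 1 - (θ + δ) := by linarith
  have hn1 : (1:ℝ) ≤ (n:ℝ) := by exact_mod_cast hn
  have hnpos : (0:ℝ) < n := by linarith
  set a : ℝ := (n:ℝ) * (1 - θ) with ha_def
  set a' : ℝ := (n:ℝ) * (1 - (θ + δ)) with ha'_def
  have ha : 0 < a := by positivity
  have ha' : 0 < a' := by positivity
  set S : ℝ := ∑ i ∈ Finset.Icc 1 n, (if θ * n < (i:ℝ) then x i else 0) with hS_def
  set S' : ℝ := ∑ i ∈ Finset.Icc 1 n, (if (θ + δ) * n < (i:ℝ) then x i else 0) with hS'_def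
  have hθn0 : 0 ≤ θ * n := mul_nonneg hθ.1.le (Nat.cast_nonneg n)
  have hθδn0 : 0 ≤ (θ + δ) * n := mul_nonneg (by linarith [hθ.1]) (Nat.cast_nonneg n)
  have hθδn : (θ + δ) * n ≤ (n:ℝ) := by nlinarith
  -- bound on S'
  have hS'le : |S'| ≤ (a' + 1) * B := by
    have := sum_tail x B hB n ((θ + δ) * n) hθδn0 hθδn
    have e : (n:ℝ) - (θ + δ) * n + 1 = a' + 1 := by rw [ha'_def]; ring
    rwa [e] at this
  -- bound on S - S'
  have hTle : |S - S'| ≤ (δ * n + 1) * B := by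
    rw [hS_def, hS'_def, ← Finset.sum_sub_distrib]
    have := sum_window x B hB n (θ * n) ((θ + δ) * n) hθn0 (by nlinarith)
    have e : (θ + δ) * n - θ * n + 1 = δ * n + 1 := by ring
    rwa [e] at this
  -- algebraic identity
  have hid : Theta x (θ + δ) n - Theta x θ n
      = S' * ((n:ℝ) * δ) / (a' * a) - (S - S') / a := by
    rw [Theta, Theta, ← hS_def, ← hS'_def, ← ha_def, ← ha'_def]
    field_simp
    ring
  rw [hid]
  have hA : |S' * ((n:ℝ) * δ) / (a' * a)| ≤ (a' + 1) * B * ((n:ℝ) * δ) / (a' * a) := by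
    rw [abs_div, abs_of_pos (mul_pos ha' ha), abs_mul,
      abs_of_nonneg (show (0:ℝ) ≤ (n:ℝ) * δ by positivity)]
    gcongr
  have hBb : |(S - S') / a| ≤ (δ * n + 1) * B / a := by
    rw [abs_div, abs_of_pos ha]
    gcongr
  have step1 : |S' * ((n:ℝ) * δ) / (a' * a) - (S - S') / a|
      ≤ (a' + 1) * B * ((n:ℝ) * δ) / (a' * a) + (δ * n + 1) * B / a :=
    (abs_sub _ _).trans (add_le_add hA hBb)
  refine step1.trans ?_
  have e1 : (a' + 1) * B * ((n:ℝ) * δ) / (a' * a)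
      = B * δ / (1 - θ) + (B * (δ / (1 - θ))) / a' := by
    rw [ha_def, ha'_def]; field_simp
  have e2 : (δ * n + 1) * B / a = B * δ / (1 - θ) + B / a := by
    rw [ha_def]; field_simp
  rw [e1, e2]
  have hδ1 : δ / (1 - θ) ≤ 1 := by rw [div_le_one h1θ]; linarith
  have b1 : (B * (δ / (1 - θ))) / a' ≤ B / a' :=
    (div_le_div_iff_of_pos_right ha').mpr (mul_le_of_le_one_right hB0 hδ1)
  have b2 : B / a' = (B / (1 - θ - δ)) / n := by
    rw [ha'_def, div_div]
    congr 1
    ring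
  have b3 : B / a = (B / (1 - θ)) / n := by
    rw [ha_def, div_div]
    congr 1
    ring
  have e3 : 2 * δ * B / (1 - θ) + (B / (1 - θ - δ) + B / (1 - θ)) / n
      = B * δ / (1 - θ) + B / a' + (B * δ / (1 - θ) + B / a) := by
    rw [add_div, ← b2, ← b3]; ring
  rw [e3]
  linarith [b1]

lemma liminf_abs_diff_le (l : Filter ℕ) [l.NeBot] (u v : ℕ → ℝ) (Bu Bv c : ℝ)
    (hu : ∀ n, |u n| ≤ Bu) (hv : ∀ n, |v n| ≤ Bv)
    (h : ∀ ε > 0, ∀ᶠ n in l, |u n - v n| ≤ c + ε) :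
    |liminf u l - liminf v l| ≤ c := by
  have main : ∀ (w z : ℕ → ℝ) (Bw Bz : ℝ), (∀ n, |w n| ≤ Bw) → (∀ n, |z n| ≤ Bz) →
      (∀ ε > 0, ∀ᶠ n in l, |w n - z n| ≤ c + ε) → liminf w l ≤ liminf z l + c := by
    intro w z Bw Bz hw hz hwz
    have hwb : IsBoundedUnder (· ≥ ·) l w :=
      Filter.isBoundedUnder_of ⟨-Bw, fun n => neg_le_of_abs_le (hw n)⟩
    have hzb : IsBoundedUnder (· ≥ ·) l z :=
      Filter.isBoundedUnder_of ⟨-Bz, fun n => neg_le_of_abs_le (hz n)⟩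
    have hzc : IsCoboundedUnder (· ≥ ·) l z :=
      (Filter.isBoundedUnder_of ⟨Bz, fun n => le_of_abs_le (hz n)⟩).isCoboundedUnder_ge
    refine le_of_forall_pos_le_add fun ε hε => ?_
    have hle : ∀ᶠ n in l, w n ≤ z n + (c + ε) := by
      refine (hwz ε hε).mono fun n hn => ?_
      have := (abs_le.mp hn).2
      linarith
    have hzc' : IsCoboundedUnder (· ≥ ·) l (fun n => z n + (c + ε)) :=
      (Filter.isBoundedUnder_of
        ⟨Bz + (c + ε), fun n => by have := le_of_abs_le (hz n); linarith⟩).isCoboundedUnder_ge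
    have step : liminf w l ≤ liminf (fun n => z n + (c + ε)) l :=
      liminf_le_liminf hle hwb hzc'
    have eq1 : liminf (fun n => z n + (c + ε)) l = liminf z l + (c + ε) :=
      liminf_add_const l z (c + ε) hzc hzb
    rw [eq1] at step
    linarith
  have h1 := main u v Bu Bv hu hv h
  have h2 := main v u Bv Bu hv hu (fun ε hε => (h ε hε).mono fun n hn => by
    rwa [abs_sub_comm] at hn)
  rw [abs_le]
  constructor <;> linarith

lemma key_diff (x : ℕ → ℝ) (B : ℝ) (hB : ∀ i, |x i| ≤ B) (A : Set ℕ) (hA : A.Infinite)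
    {θ δ : ℝ} (hθ : θ ∈ Set.Ioo (0:ℝ) 1) (hδ : 0 < δ) (hδ' : δ < 1 - θ) :
    |liminf (fun n => Theta x (θ + δ) n) (atTop ⊓ 𝓟 A) -
      liminf (fun n => Theta x θ n) (atTop ⊓ 𝓟 A)| ≤ 2 * δ * B / (1 - θ) := by
  have hB0 : 0 ≤ B := le_trans (abs_nonneg _) (hB 0)
  have h1θ : 0 < 1 - θ := by linarith [hθ.2]
  have h1θδ : 0 < 1 - θ - δ := by linarith
  have hθδ : θ + δ ∈ Set.Ioo (0:ℝ) 1 := ⟨by linarith [hθ.1], by linarith⟩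
  have hNB : (atTop ⊓ 𝓟 A).NeBot := by
    rw [Filter.inf_principal_neBot_iff]
    intro U hU
    obtain ⟨N, hN⟩ := mem_atTop_sets.mp hU
    obtain ⟨a, haA, haN⟩ := hA.exists_gt N
    exact ⟨a, hN a haN.le, haA⟩
  set K : ℝ := B / (1 - θ - δ) + B / (1 - θ) with hK
  have hK0 : 0 ≤ K := by positivity
  refine liminf_abs_diff_le _ _ _ (B + B / (1 - (θ + δ))) (B + B / (1 - θ)) _
    (theta_abs_le x B hB hθδ) (theta_abs_le x B hB hθ) ?_
  intro ε hε
  refine Eventually.filter_mono inf_le_left ?_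
  rw [eventually_atTop]
  refine ⟨max 1 ⌈K / ε⌉₊, fun n hn => ?_⟩
  have h1 : 0 < n := lt_of_lt_of_le Nat.one_pos (le_trans (le_max_left _ _) hn)
  have h2 : ⌈K / ε⌉₊ ≤ n := le_trans (le_max_right _ _) hn
  have hnpos : (0:ℝ) < n := by exact_mod_cast h1
  have hKn : K / n ≤ ε := by
    rw [div_le_iff₀ hnpos]
    have : K / ε ≤ (n : ℝ) := le_trans (Nat.le_ceil _) (by exact_mod_cast h2)
    rw [div_le_iff₀ hε] at this
    linarith
  have := theta_diff_le x B hB hθ hδ hδ' h1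
  rw [← hK] at this
  exact this.trans (by linarith)

/-- For `x ∈ ℓ∞` and an infinite `A ⊆ ℕ`, the function
`φ(θ) = liminf_{n ∈ A} Θ_{θ,n}(x)` is continuous on `(0,1)`; in fact
`|φ(θ+δ) - φ(θ)| ≤ 2δ‖x‖/(1-θ)` whenever `θ ∈ (0,1)` and `0 < δ < 1 - θ`. -/
theorem stmt15 (x : EllInfty) (A : Set ℕ) (hA : A.Infinite) :
    ContinuousOn (fun θ : ℝ => liminf (fun n => Theta (⇑x) θ n) (atTop ⊓ 𝓟 A))
      (Set.Ioo 0 1) ∧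
    ∀ θ ∈ Set.Ioo (0 : ℝ) 1, ∀ δ : ℝ, 0 < δ → δ < 1 - θ →
      |liminf (fun n => Theta (⇑x) (θ + δ) n) (atTop ⊓ 𝓟 A) -
        liminf (fun n => Theta (⇑x) θ n) (atTop ⊓ 𝓟 A)| ≤ 2 * δ * ‖x‖ / (1 - θ) := by
  
  have hB : ∀ i, |(⇑x) i| ≤ ‖x‖ := fun i => by
    have h := lp.norm_apply_le_norm ENNReal.top_ne_zero x i
    rwa [Real.norm_eq_abs] at h
  set φ : ℝ → ℝ := fun θ => liminf (fun n => Theta (⇑x) θ n) (atTop ⊓ 𝓟 A) with hφ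
  have hmain : ∀ θ ∈ Set.Ioo (0:ℝ) 1, ∀ δ : ℝ, 0 < δ → δ < 1 - θ →
      |φ (θ + δ) - φ θ| ≤ 2 * δ * ‖x‖ / (1 - θ) := fun θ hθ δ h1 h2 =>
    key_diff (⇑x) ‖x‖ hB A hA hθ h1 h2
  refine ⟨?_, hmain⟩
  have hC : ∀ θ₁ ∈ Set.Ioo (0:ℝ) 1, ∀ θ₂ ∈ Set.Ioo (0:ℝ) 1, θ₁ ≤ θ₂ →
      |φ θ₂ - φ θ₁| ≤ 2 * (θ₂ - θ₁) * ‖x‖ / (1 - θ₁) := by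
    intro θ₁ h₁ θ₂ h₂ hle
    rcases eq_or_lt_of_le hle with rfl | hlt
    · rw [sub_self, abs_zero, show 2 * (θ₁ - θ₁) * ‖x‖ / (1 - θ₁) = 0 from by ring]
    · have := hmain θ₁ h₁ (θ₂ - θ₁) (by linarith) (by linarith [h₂.2])
      rw [show θ₁ + (θ₂ - θ₁) = θ₂ from by ring] at this
      exact this
  intro θ₀ hθ₀
  have h1θ₀ : 0 < 1 - θ₀ := by linarith [hθ₀.2]
  have hx0 : (0:ℝ) ≤ ‖x‖ := norm_nonneg x
  rw [Metric.continuousWithinAt_iff]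
  intro ε hε
  refine ⟨ε * (1 - θ₀) / (2 * ‖x‖ + 1), div_pos (mul_pos hε h1θ₀) (by positivity), fun θ hθ hd => ?_⟩
  rw [Real.dist_eq] at hd ⊢
  have hb : |φ θ - φ θ₀| ≤ 2 * |θ - θ₀| * ‖x‖ / (1 - θ₀) := by
    rcases le_total θ θ₀ with h | h
    · have hC' := hC θ hθ θ₀ hθ₀ h
      have h1θ : 0 < 1 - θ := by linarith [hθ.2]
      rw [abs_sub_comm, abs_of_nonpos (by linarith : θ - θ₀ ≤ 0)]
      refine le_trans hC' ?_
      rw [show -(θ - θ₀) = θ₀ - θ from by ring]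
      rw [div_le_div_iff₀ h1θ h1θ₀]
      nlinarith [mul_nonneg hx0 (sq_nonneg (θ₀ - θ))]
    · have hC' := hC θ₀ hθ₀ θ hθ h
      rwa [abs_of_nonneg (by linarith : (0:ℝ) ≤ θ - θ₀)]
  have hd2 : |θ - θ₀| * (2 * ‖x‖ + 1) < ε * (1 - θ₀) :=
    (lt_div_iff₀ (by positivity)).mp hd
  calc |φ θ - φ θ₀| ≤ 2 * |θ - θ₀| * ‖x‖ / (1 - θ₀) := hb
    _ < ε := by
      rw [div_lt_iff₀ h1θ₀]
      nlinarith [abs_nonneg (θ - θ₀)]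
end
end

section
/- Let ℱ and 𝒢 be free ultrafilters on ℕ and let (θ_k) be a sequence in (0,1) with θ_k → 1⁻. Then the map f : ℓ∞ → ℝ defined by f(x) = ℱ-lim_k ( 𝒢-lim_n Θ_{θ_k,n}(x) ) is a positive continuous linear functional on ℓ∞ which extends the Cesàro mean, i.e., f ∈ Cesex. -/
open Filter Topology

noncomputable section

instance : Nontrivial EllInfty := by
  refine ⟨chi Set.univ, 0, fun h => ?_⟩
  have h0 : (chi Set.univ) 0 = (0 : EllInfty) 0 := by rw [h]
  rw [lp.coeFn_zero] at h0
  simp [chi, chiFun] at h0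

section Helpers

lemma sum_theta_eq (x : ℕ → ℝ) {θ : ℝ} (hθ0 : 0 ≤ θ) (n : ℕ) :
    (∑ i ∈ Finset.Icc 1 n, if θ * n < (i : ℝ) then x i else 0)
      = ∑ i ∈ Finset.Ioc (⌊θ * n⌋₊) n, x i := by
  have hp : ∀ i : ℕ, (θ * n < (i : ℝ)) ↔ ⌊θ * (n:ℝ)⌋₊ < i := by
    intro i
    rw [Nat.floor_lt (by positivity)]
  simp_rw [hp]
  rw [Finset.sum_ite, Finset.sum_const, smul_zero, add_zero]
  congr 1
  ext i
  simp only [Finset.mem_filter, Finset.mem_Icc, Finset.mem_Ioc]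
  omega

lemma Theta_eq (x : ℕ → ℝ) {θ : ℝ} (hθ0 : 0 ≤ θ) (n : ℕ) :
    Theta x θ n = (∑ i ∈ Finset.Ioc (⌊θ * n⌋₊) n, x i) / (n * (1 - θ)) := by
  rw [Theta, sum_theta_eq x hθ0]

lemma floor_le_n {θ : ℝ} (hθ1 : θ ≤ 1) (n : ℕ) : ⌊θ * (n:ℝ)⌋₊ ≤ n := by
  have h : θ * (n:ℝ) ≤ (n:ℝ) := by nlinarith [show (0:ℝ) ≤ (n:ℝ) from Nat.cast_nonneg n]
  have h2 := Nat.floor_le_floor h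
  rwa [Nat.floor_natCast] at h2

lemma abs_theta_le (x : ℕ → ℝ) {M θ : ℝ} (hM : ∀ i, |x i| ≤ M)
    (hθ : θ ∈ Set.Ioo (0:ℝ) 1) {n : ℕ} (hn : 1 ≤ n) :
    |Theta x θ n| ≤ M + M / (n * (1 - θ)) := by
  obtain ⟨hθ0, hθ1⟩ := hθ
  have hM0 : 0 ≤ M := le_trans (abs_nonneg _) (hM 0)
  set m := ⌊θ * (n:ℝ)⌋₊ with hm
  have hmn : m ≤ n := floor_le_n hθ1.le n
  have hd : (0:ℝ) < n * (1 - θ) := by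
    have : (1:ℝ) ≤ n := by exact_mod_cast hn
    nlinarith
  rw [Theta_eq x hθ0.le, ← hm, abs_div, abs_of_pos hd]
  have habs : |∑ i ∈ Finset.Ioc m n, x i| ≤ M * ((n:ℝ) - m) := by
    calc |∑ i ∈ Finset.Ioc m n, x i| ≤ ∑ i ∈ Finset.Ioc m n, |x i| :=
        Finset.abs_sum_le_sum_abs _ _
    _ ≤ ∑ i ∈ Finset.Ioc m n, M := Finset.sum_le_sum fun i _ => hM i
    _ = M * ((n:ℝ) - m) := by
        rw [Finset.sum_const, Nat.card_Ioc, nsmul_eq_mul, Nat.cast_sub hmn]; ring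
  have hfl : θ * n - 1 ≤ (m:ℝ) := by
    have := Nat.sub_one_lt_floor (θ * n)
    linarith [(Nat.lt_floor_add_one (θ * (n:ℝ)))]
  have h2 : M * ((n:ℝ) - m) ≤ M * (n * (1-θ) + 1) := by
    apply mul_le_mul_of_nonneg_left _ hM0
    nlinarith
  rw [div_le_iff₀ hd]
  calc |∑ i ∈ Finset.Ioc m n, x i| ≤ M * (n * (1-θ) + 1) := le_trans habs h2
  _ = (M + M / (n * (1 - θ))) * (n * (1 - θ)) := by field_simp

lemma abs_theta_le_all (x : ℕ → ℝ) {M θ : ℝ} (hM : ∀ i, |x i| ≤ M)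
    (hθ : θ ∈ Set.Ioo (0:ℝ) 1) (n : ℕ) : |Theta x θ n| ≤ M + M / (1 - θ) := by
  have hM0 : 0 ≤ M := le_trans (abs_nonneg _) (hM 0)
  have h1 : (0:ℝ) < 1 - θ := by linarith [hθ.2]
  rcases Nat.eq_zero_or_pos n with rfl | hn
  · have h0 : Theta x θ 0 = 0 := by simp [Theta]
    rw [h0, abs_zero]
    positivity
  · refine le_trans (abs_theta_le x hM hθ hn) ?_
    have hn1 : (1:ℝ) ≤ (n:ℝ) := by exact_mod_cast hn
    have h2 : M / ((n:ℝ) * (1-θ)) ≤ M / (1-θ) := by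
      apply div_le_div_of_nonneg_left hM0 h1
      nlinarith
    linarith

lemma tendsto_ulim (F : Ultrafilter ℕ) (x : ℕ → ℝ) (C : ℝ) (h : ∀ n, |x n| ≤ C) :
    Tendsto x (F : Filter ℕ) (𝓝 (ulim F x)) := by
  have hle : (F.map x : Filter ℝ) ≤ Filter.principal (Set.Icc (-C) C) := by
    rw [Ultrafilter.coe_map, Filter.le_principal_iff, Filter.mem_map]
    have : x ⁻¹' Set.Icc (-C) C = Set.univ := by
      ext n; simp [Set.mem_Icc, abs_le.mp (h n)]
    rw [this]; exact Filter.univ_mem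
  obtain ⟨a, -, ha⟩ := (isCompact_Icc (a := -C) (b := C)).ultrafilter_le_nhds (F.map x) hle
  rw [Ultrafilter.coe_map] at ha
  have hta : Tendsto x (F : Filter ℕ) (𝓝 a) := ha
  have : ulim F x = a := hta.limUnder_eq
  rwa [this]

lemma theta_add (x y : ℕ → ℝ) (θ : ℝ) (n : ℕ) :
    Theta (x + y) θ n = Theta x θ n + Theta y θ n := by
  unfold Theta
  rw [← add_div]
  congr 1
  rw [← Finset.sum_add_distrib]
  apply Finset.sum_congr rfl
  intro i _
  simp only [Pi.add_apply]
  split <;> simp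

lemma theta_smul (a : ℝ) (x : ℕ → ℝ) (θ : ℝ) (n : ℕ) :
    Theta (a • x) θ n = a * Theta x θ n := by
  unfold Theta
  rw [← mul_div_assoc, Finset.mul_sum]
  congr 1
  apply Finset.sum_congr rfl
  intro i _
  simp only [Pi.smul_apply, smul_eq_mul]
  split <;> simp

lemma sum_Icc_eq_Ioc (x : ℕ → ℝ) (k : ℕ) :
    ∑ i ∈ Finset.Icc 1 k, x i = ∑ i ∈ Finset.Ioc 0 k, x i := by
  congr 1
  all_goals
    ext i
    simp only [Finset.mem_Icc, Finset.mem_Ioc]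
    omega

lemma theta_tendsto_cesaro (x : ℕ → ℝ) (c : ℝ) (hx : Tendsto (cesaroAvg x) atTop (𝓝 c))
    {θ : ℝ} (hθ : θ ∈ Set.Ioo (0:ℝ) 1) : Tendsto (Theta x θ) atTop (𝓝 c) := by
  obtain ⟨hθ0, hθ1⟩ := hθ
  have h1θ : (0:ℝ) < 1 - θ := by linarith
  have hmul : Tendsto (fun n : ℕ => θ * (n:ℝ)) atTop atTop :=
    Tendsto.const_mul_atTop hθ0 tendsto_natCast_atTop_atTop
  have hm : Tendsto (fun n : ℕ => ⌊θ * (n:ℝ)⌋₊) atTop atTop :=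
    tendsto_nat_floor_atTop.comp hmul
  have h3 : Tendsto (fun n : ℕ => cesaroAvg x ⌊θ * (n:ℝ)⌋₊) atTop (𝓝 c) := hx.comp hm
  have h4 : Tendsto (fun n : ℕ => (⌊θ * (n:ℝ)⌋₊ : ℝ) / n) atTop (𝓝 θ) := by
    have hlo : Tendsto (fun n : ℕ => θ - 1 / (n:ℝ)) atTop (𝓝 θ) := by
      have : Tendsto (fun n : ℕ => 1 / (n:ℝ)) atTop (𝓝 0) := tendsto_one_div_atTop_nhds_zero_nat
      have h := tendsto_const_nhds (x := θ) (f := (atTop : Filter ℕ)) |>.sub this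
      simpa using h
    apply tendsto_of_tendsto_of_tendsto_of_le_of_le' hlo tendsto_const_nhds
    · filter_upwards [Filter.eventually_ge_atTop 1] with n hn
      have hn0 : (0:ℝ) < n := by exact_mod_cast hn
      have hfl : θ * (n:ℝ) - 1 ≤ (⌊θ * (n:ℝ)⌋₊ : ℝ) := by
        linarith [Nat.lt_floor_add_one (θ * (n:ℝ))]
      rw [sub_le_iff_le_add, ← add_div, le_div_iff₀ hn0]
      linarith
    · filter_upwards [Filter.eventually_ge_atTop 1] with n hn
      have hn0 : (0:ℝ) < n := by exact_mod_cast hn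
      rw [div_le_iff₀ hn0]
      exact le_trans (Nat.floor_le (by positivity)) (by rw [mul_comm])
  have h5 := (hx.sub (h4.mul h3)).div_const (1 - θ)
  have hc : (c - θ * c) / (1 - θ) = c := by
    field_simp
  rw [hc] at h5
  apply h5.congr'
  filter_upwards [Filter.eventually_ge_atTop 1] with n hn
  have hn0 : (0:ℝ) < n := by exact_mod_cast hn
  set m := ⌊θ * (n:ℝ)⌋₊ with hmm
  have hmn : m ≤ n := floor_le_n hθ1.le n
  have hsplit : (∑ i ∈ Finset.Ioc 0 m, x i) + ∑ i ∈ Finset.Ioc m n, x i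
      = ∑ i ∈ Finset.Ioc 0 n, x i :=
    Finset.sum_Ioc_consecutive _ (Nat.zero_le m) hmn
  have hfrac : ((m:ℝ) / n) * cesaroAvg x m = (∑ i ∈ Finset.Ioc 0 m, x i) / n := by
    rcases Nat.eq_zero_or_pos m with hm0 | hm0
    · simp [hm0, cesaroAvg]
    · have hm0' : (0:ℝ) < m := by exact_mod_cast hm0
      rw [cesaroAvg, sum_Icc_eq_Ioc]
      field_simp
  rw [Theta_eq x hθ0.le, ← hmm, cesaroAvg, sum_Icc_eq_Ioc, hfrac]
  rw [div_sub_div_same, ← hsplit]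
  field_simp
  try ring

end Helpers

/-- For free ultrafilters `ℱ, 𝒢` and a sequence `θ_k → 1⁻` in `(0,1)`, the map
`x ↦ ℱ-lim_k 𝒢-lim_n Θ_{θ_k,n}(x)` is a positive continuous linear functional
on `ℓ∞` extending the Cesàro mean. -/
theorem stmt16 (θs : ℕ → ℝ) (hθ : ∀ k, θs k ∈ Set.Ioo (0 : ℝ) 1)
    (hθlim : Tendsto θs atTop (𝓝 1)) (F : Ultrafilter ℕ) (hF : IsFreeUltrafilter F)
    (G : Ultrafilter ℕ) (hG : IsFreeUltrafilter G) :
    ∃ f : EllInfty →L[ℝ] ℝ, f ∈ Cesex ∧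
      ∀ x : EllInfty, f x = ulim F (fun k => ulim G (fun n => Theta (⇑x) (θs k) n)) := by
  have hGat : (G : Filter ℕ) ≤ atTop := by rw [← Nat.cofinite_eq_atTop]; exact hG
  have hbound : ∀ (x : EllInfty) (i : ℕ), |x i| ≤ ‖x‖ := by
    intro x i
    have := lp.norm_apply_le_norm (E := fun _ : ℕ => ℝ) (by norm_num : (⊤:ENNReal) ≠ 0) x i
    simpa using this
  have hnorm0 : ∀ x : EllInfty, (0:ℝ) ≤ ‖x‖ := fun x => norm_nonneg x
  set inn : EllInfty → ℕ → ℝ :=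
    fun x k => ulim G (fun n => Theta (⇑x) (θs k) n) with hinn
  have hGlim : ∀ (x : EllInfty) (k : ℕ),
      Tendsto (fun n => Theta (⇑x) (θs k) n) (G : Filter ℕ) (𝓝 (inn x k)) := by
    intro x k
    exact tendsto_ulim G _ (‖x‖ + ‖x‖ / (1 - θs k))
      (fun n => abs_theta_le_all (⇑x) (hbound x) (hθ k) n)
  have hGbound : ∀ (x : EllInfty) (k : ℕ), |inn x k| ≤ ‖x‖ := by
    intro x k
    have h1θ : (0:ℝ) < 1 - θs k := by linarith [(hθ k).2]
    have habs : Tendsto (fun n => |Theta (⇑x) (θs k) n|) (G : Filter ℕ) (𝓝 |inn x k|) :=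
      (hGlim x k).abs
    have hBat : Tendsto (fun n : ℕ => ‖x‖ + ‖x‖ / ((n:ℝ) * (1 - θs k))) atTop (𝓝 (‖x‖ + 0)) := by
      apply tendsto_const_nhds.add
      exact Tendsto.div_atTop tendsto_const_nhds
        (Tendsto.atTop_mul_const h1θ tendsto_natCast_atTop_atTop)
    have hB : Tendsto (fun n : ℕ => ‖x‖ + ‖x‖ / ((n:ℝ) * (1 - θs k))) (G : Filter ℕ)
        (𝓝 (‖x‖ + 0)) := hBat.mono_left hGat
    have hev : ∀ᶠ n in (G : Filter ℕ),
        |Theta (⇑x) (θs k) n| ≤ ‖x‖ + ‖x‖ / ((n:ℝ) * (1 - θs k)) := by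
      have : ∀ᶠ n in (atTop : Filter ℕ),
          |Theta (⇑x) (θs k) n| ≤ ‖x‖ + ‖x‖ / ((n:ℝ) * (1 - θs k)) := by
        filter_upwards [Filter.eventually_ge_atTop 1] with n hn
        exact abs_theta_le x (hbound x) (hθ k) hn
      exact hGat this
    have := le_of_tendsto_of_tendsto habs hB hev
    simpa using this
  have hFlim : ∀ x : EllInfty, Tendsto (inn x) (F : Filter ℕ) (𝓝 (ulim F (inn x))) :=
    fun x => tendsto_ulim F _ ‖x‖ (hGbound x)
  set val : EllInfty → ℝ := fun x => ulim F (inn x) with hval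
  have hval_add : ∀ x y : EllInfty, val (x + y) = val x + val y := by
    intro x y
    have h1 : ∀ k, inn (x + y) k = inn x k + inn y k := by
      intro k
      have ht : Tendsto (fun n => Theta (⇑(x + y)) (θs k) n) (G : Filter ℕ)
          (𝓝 (inn x k + inn y k)) := by
        apply ((hGlim x k).add (hGlim y k)).congr
        intro n
        rw [lp.coeFn_add, theta_add]
      exact ht.limUnder_eq
    have ht : Tendsto (inn (x + y)) (F : Filter ℕ) (𝓝 (val x + val y)) := by
      apply ((hFlim x).add (hFlim y)).congr
      intro k
      rw [h1 k]
    exact ht.limUnder_eq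
  have hval_smul : ∀ (a : ℝ) (x : EllInfty), val (a • x) = a * val x := by
    intro a x
    have h1 : ∀ k, inn (a • x) k = a * inn x k := by
      intro k
      have ht : Tendsto (fun n => Theta (⇑(a • x)) (θs k) n) (G : Filter ℕ)
          (𝓝 (a * inn x k)) := by
        apply ((hGlim x k).const_mul a).congr
        intro n
        rw [lp.coeFn_smul, theta_smul]
      exact ht.limUnder_eq
    have ht : Tendsto (inn (a • x)) (F : Filter ℕ) (𝓝 (a * val x)) := by
      apply ((hFlim x).const_mul a).congr
      intro k
      rw [h1 k]
    exact ht.limUnder_eq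
  have hval_bound : ∀ x : EllInfty, |val x| ≤ ‖x‖ := fun x =>
    le_of_tendsto (hFlim x).abs (Filter.Eventually.of_forall (hGbound x))
  let L : EllInfty →ₗ[ℝ] ℝ :=
    { toFun := val
      map_add' := hval_add
      map_smul' := fun a x => by simpa using hval_smul a x }
  let f : EllInfty →L[ℝ] ℝ := L.mkContinuous 1 (fun x => by
    rw [one_mul]
    simpa [L, Real.norm_eq_abs] using hval_bound x)
  refine ⟨f, ⟨?_, ?_⟩, fun x => rfl⟩
  · intro x hx
    have hth : ∀ k n, 0 ≤ Theta (⇑x) (θs k) n := by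
      intro k n
      apply div_nonneg
      · apply Finset.sum_nonneg
        intro i _
        split
        · exact hx i
        · exact le_refl 0
      · exact mul_nonneg (by positivity) (by linarith [(hθ k).2])
    have h1 : ∀ k, 0 ≤ inn x k := fun k =>
      ge_of_tendsto (hGlim x k) (Filter.Eventually.of_forall (hth k))
    exact ge_of_tendsto (hFlim x) (Filter.Eventually.of_forall h1)
  · intro x c hc
    have h1 : ∀ k, inn x k = c := fun k =>
      ((theta_tendsto_cesaro (⇑x) c hc (hθ k)).mono_left hGat).limUnder_eq
    have ht : Tendsto (inn x) (F : Filter ℕ) (𝓝 c) :=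
      tendsto_const_nhds.congr (fun k => (h1 k).symm)
    exact ht.limUnder_eq
end
end
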